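/- arXiv:2211.02170 — 7 statements merged into one kernel-verified Lean document; each statement's English description precedes it below -/
import Mathlib

section
/- Let π be a partition with mark m = m(π). Then len(β(π)) = m − 1, and either len(α(π)) = m − 1 or len(α(π)) = m. -/
/-- A partition: a non-increasing list of positive integers. -/
def IsPartition (π : List ℕ) : Prop :=
  π.Pairwise (· ≥ ·) ∧ ∀ x ∈ π, 0 < x

/-- A partition of `n` into distinct positive parts, listed in (strictly) decreasing order. -/
def DisPart (n : ℕ) (γ : List ℕ) : Prop :=
  γ.Pairwise (· > ·) ∧ (∀ x ∈ γ, 0 < x) ∧ γ.sum = n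

/-- A partition of `n` into exactly `k` distinct positive parts. -/
def DisPartK (n k : ℕ) (γ : List ℕ) : Prop :=
  DisPart n γ ∧ γ.length = k

/-- `β` majorizes `α`. -/
def Majorizes (β α : List ℕ) : Prop :=
  β.sum = α.sum ∧ ∀ k ≤ min α.length β.length, (α.take k).sum ≤ (β.take k).sum

/-- α(π): the parts `d_i − i + 1` for 1-based indices `i` with `d_i ≥ i`. -/
def alphaOf (π : List ℕ) : List ℕ :=
  (List.range π.length).filterMap
    (fun i => if i + 1 ≤ π.getD i 0 then some (π.getD i 0 - i) else none)

/-- Number of boxes of the Ferrers diagram strictly below the diagonal in (1-based) column `j`. -/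
def betaColCount (π : List ℕ) (j : ℕ) : ℕ :=
  ((List.range π.length).filter (fun i => decide (j ≤ i ∧ j ≤ π.getD i 0))).length

/-- β(π): the positive column counts below the main diagonal, in decreasing order. -/
def betaOf (π : List ℕ) : List ℕ :=
  ((List.range π.length).map (fun j => betaColCount π (j + 1))).filter (fun c => c != 0)

/-- The mark (modified Durfee number) `m(π) = max {i : d_i ≥ i − 1}` (1-based indices). -/
noncomputable def mark (π : List ℕ) : ℕ :=
  sSup {i : ℕ | 1 ≤ i ∧ i ≤ π.length ∧ i ≤ π.getD (i - 1) 0 + 1}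

def IsIndepSet {V : Type*} (G : SimpleGraph V) (s : Set V) : Prop :=
  s.Pairwise (fun v w => ¬ G.Adj v w)

/-- `(K, S)` is a KS-partition of `G`. -/
def IsKS {V : Type*} [Fintype V] (G : SimpleGraph V) (K S : Finset V) : Prop :=
  (∀ v, v ∈ K ∨ v ∈ S) ∧ Disjoint K S ∧ G.IsClique (K : Set V) ∧ IsIndepSet G (S : Set V)

def IsSplit {V : Type*} [Fintype V] (G : SimpleGraph V) : Prop :=
  ∃ K S, IsKS G K S

noncomputable def cliqueNum {V : Type*} [Fintype V] (G : SimpleGraph V) : ℕ :=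
  sSup {n | ∃ s : Finset V, G.IsNClique n s}

noncomputable def indepNum {V : Type*} [Fintype V] (G : SimpleGraph V) : ℕ :=
  sSup {n | ∃ s : Finset V, IsIndepSet G (s : Set V) ∧ s.card = n}

/-- A balanced split graph: some KS-partition is simultaneously K-max and S-max. -/
def IsBalancedSplit {V : Type*} [Fintype V] (G : SimpleGraph V) : Prop :=
  IsSplit G ∧ ∃ K S, IsKS G K S ∧ K.card = cliqueNum G ∧ S.card = indepNum G

/-- An unbalanced split graph. -/
def IsUnbalancedSplit {V : Type*} [Fintype V] (G : SimpleGraph V) : Prop :=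
  IsSplit G ∧ ¬ ∃ K S, IsKS G K S ∧ K.card = cliqueNum G ∧ S.card = indepNum G

/-- `π` is the degree sequence of `G` (degrees in non-increasing order). -/
def HasDegSeq {V : Type*} [Fintype V] (G : SimpleGraph V) [DecidableRel G.Adj]
    (π : List ℕ) : Prop :=
  π.Pairwise (· ≥ ·) ∧ (π : Multiset ℕ) = Finset.univ.val.map (fun v => G.degree v)

def NoIsolated {V : Type*} [Fintype V] (G : SimpleGraph V) [DecidableRel G.Adj] : Prop :=
  ∀ v, 0 < G.degree v

def IsThreshold {V : Type*} [Fintype V] (G : SimpleGraph V) : Prop :=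
  ∃ (t : ℝ) (a : V → ℝ), 0 < t ∧ (∀ v, 0 < a v) ∧
    ∀ s : Finset V, (IsIndepSet G (s : Set V) ↔ ∑ v ∈ s, a v ≤ t)

noncomputable def chromNum {V : Type*} [Fintype V] (G : SimpleGraph V) : ℕ :=
  sInf {n | G.Colorable n}

def IsNG {V : Type*} [Fintype V] (G : SimpleGraph V) : Prop :=
  chromNum G + chromNum Gᶜ = Fintype.card V + 1

def ngA {V : Type*} [Fintype V] (G : SimpleGraph V) [DecidableRel G.Adj] : Set V :=
  {v | G.degree v = chromNum G - 1}

def IsNG1 {V : Type*} [Fintype V] (G : SimpleGraph V) [DecidableRel G.Adj] : Prop :=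
  IsNG G ∧ G.IsClique (ngA G)

def IsNG2 {V : Type*} [Fintype V] (G : SimpleGraph V) [DecidableRel G.Adj] : Prop :=
  IsNG G ∧ IsIndepSet G (ngA G)

def IsNG3 {V : Type*} [Fintype V] (G : SimpleGraph V) [DecidableRel G.Adj] : Prop :=
  IsNG G ∧ Nonempty ((G.induce (ngA G)) ≃g SimpleGraph.cycleGraph 5)

/-- `[α|β]` is an S-block for the integer `n`. -/
def IsSBlock (n : ℕ) (α β : List ℕ) : Prop :=
  DisPart n α ∧ DisPart n β ∧ Majorizes β α ∧
    (α.length = β.length ∨ α.length = β.length + 1)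

/-- `[α₁|β₁] ⪰ [α₂|β₂]` in the block order. -/
def BlockMaj (α₁ β₁ α₂ β₂ : List ℕ) : Prop :=
  Majorizes α₁ α₂ ∧ Majorizes β₂ β₁

/-- τ'_k(n) = (n − C(k,2), k−1, k−2, …, 2, 1). -/
def tauMax (n k : ℕ) : List ℕ :=
  (n - Nat.choose k 2) :: ((List.range (k - 1)).reverse.map (· + 1))

/-- τ_k(n): parts (k−i+1)+q+1 for 1 ≤ i ≤ r and (k−i+1)+q for r < i ≤ k,
where n − C(k+1,2) = qk + r, 0 ≤ r < k. -/
def tauMin (n k : ℕ) : List ℕ :=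
  (List.range k).map
    (fun i => (k - i) + (n - Nat.choose (k + 1) 2) / k +
      (if i < (n - Nat.choose (k + 1) 2) % k then 1 else 0))

/-- `β` covers `α` in `Dis(n)`. -/
def CoversDis (n : ℕ) (β α : List ℕ) : Prop :=
  DisPart n α ∧ DisPart n β ∧ Majorizes β α ∧ β ≠ α ∧
    ¬ ∃ γ, DisPart n γ ∧ Majorizes β γ ∧ Majorizes γ α ∧ γ ≠ α ∧ γ ≠ β

/-- `[α₁|β₁]` covers `[α₂|β₂]` in `S-Block(n)`. -/
def BlockCovers (n : ℕ) (α₁ β₁ α₂ β₂ : List ℕ) : Prop :=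
  IsSBlock n α₁ β₁ ∧ IsSBlock n α₂ β₂ ∧ BlockMaj α₁ β₁ α₂ β₂ ∧ ¬(α₁ = α₂ ∧ β₁ = β₂) ∧
    ¬ ∃ α β, IsSBlock n α β ∧ BlockMaj α₁ β₁ α β ∧ BlockMaj α β α₂ β₂ ∧
      ¬(α = α₁ ∧ β = β₁) ∧ ¬(α = α₂ ∧ β = β₂)

/-- `[α|β]` is a threshold-covered block: member of TC(n). -/
def InTC (n : ℕ) (α β : List ℕ) : Prop :=
  IsSBlock n α β ∧ CoversDis n β α

def IsLubDis (n : ℕ) (a b c : List ℕ) : Prop :=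
  Majorizes c a ∧ Majorizes c b ∧
    ∀ d, DisPart n d → Majorizes d a → Majorizes d b → Majorizes d c

def IsGlbDis (n : ℕ) (a b c : List ℕ) : Prop :=
  Majorizes a c ∧ Majorizes b c ∧
    ∀ d, DisPart n d → Majorizes a d → Majorizes b d → Majorizes c d

lemma filter_range_lt_length (k L : ℕ) (h : k ≤ L) :
    ((List.range L).filter (fun j => decide (j < k))).length = k := by
  induction L with
  | zero =>
    simp only [List.range_zero, List.filter_nil, List.length_nil]
    omega
  | succ n ih =>
    by_cases hk : k ≤ n
    · rw [List.range_succ, List.filter_append]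
      have : ¬ (n < k) := by omega
      simp [ih hk, this]
    · have hkn : k = n + 1 := by omega
      subst hkn
      have h1 : (List.range (n+1)).filter (fun j => decide (j < n + 1)) = List.range (n+1) := by
        apply List.filter_eq_self.mpr
        intro a ha
        simp only [List.mem_range] at ha
        simpa using ha
      rw [h1, List.length_range]

lemma length_filterMap_ite (l : List ℕ) (p : ℕ → Prop) [DecidablePred p] (g : ℕ → ℕ) :
    (l.filterMap (fun i => if p i then some (g i) else none)).length
      = (l.filter (fun i => decide (p i))).length := by
  induction l with
  | nil => rfl
  | cons a t ih =>
    by_cases h : p a <;>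
      simp [List.filterMap_cons, List.filter_cons, h, ih]

/-- If π is a partition with mark m = m(π), then len(β(π)) = m − 1, and
either len(α(π)) = m − 1 or len(α(π)) = m. -/
theorem stmt0 (π : List ℕ) (hπ : IsPartition π) (hne : π ≠ []) :
    (betaOf π).length = mark π - 1 ∧
      ((alphaOf π).length = mark π - 1 ∨ (alphaOf π).length = mark π) := by
  obtain ⟨hsort, hpos⟩ := hπ
  set L := π.length with hLdef
  have hL1 : 1 ≤ L := by
    rw [hLdef]
    cases π with
    | nil => exact absurd rfl hne
    | cons a t => simp
  set d : ℕ → ℕ := fun i => π.getD i 0 with hddef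
  have hanti : ∀ i j : ℕ, i ≤ j → d j ≤ d i := by
    intro i j hij
    by_cases hj : j < L
    · have hi : i < L := lt_of_le_of_lt hij hj
      rcases eq_or_lt_of_le hij with rfl | h
      · exact le_refl _
      · have := List.pairwise_iff_get.mp hsort ⟨i, hi⟩ ⟨j, hj⟩ h
        simp only [hddef, List.getD_eq_getElem π 0 hi, List.getD_eq_getElem π 0 hj]
        simpa [List.get_eq_getElem] using this
    · have hz : d j = 0 := List.getD_eq_default π 0 (by omega)
      simp [hz]
  set S : Set ℕ := {i : ℕ | 1 ≤ i ∧ i ≤ π.length ∧ i ≤ π.getD (i - 1) 0 + 1} with hSdef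
  have hS1 : (1 : ℕ) ∈ S := ⟨le_refl 1, hL1, by omega⟩
  have hbdd : BddAbove S := ⟨L, fun i hi => hi.2.1⟩
  set M := mark π with hMdef
  have hM_mem : M ∈ S := Nat.sSup_mem ⟨1, hS1⟩ hbdd
  have hM1 : 1 ≤ M := hM_mem.1
  have hML : M ≤ L := hM_mem.2.1
  have hMd : M ≤ d (M - 1) + 1 := hM_mem.2.2
  have hub : ∀ i, 1 ≤ i → i ≤ L → i ≤ d (i - 1) + 1 → i ≤ M := by
    intro i h1 h2 h3
    exact le_csSup hbdd ⟨h1, h2, h3⟩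
  -- beta
  have hbeta_iff : ∀ j, j < L → (betaColCount π (j + 1) ≠ 0 ↔ j + 2 ≤ M) := by
    intro j hj
    constructor
    · intro hne0
      have hpos' : 0 < ((List.range π.length).filter
          (fun i => decide (j + 1 ≤ i ∧ j + 1 ≤ π.getD i 0))).length := by
        rw [betaColCount] at hne0; omega
      obtain ⟨i, hi⟩ := List.length_pos_iff_exists_mem.mp hpos'
      rw [List.mem_filter, List.mem_range] at hi
      obtain ⟨hiL, hcond⟩ := hi
      have hcond' : j + 1 ≤ i ∧ j + 1 ≤ d i := by
        simpa [hddef] using hcond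
      have h1 : j + 1 ≤ d (j + 1) := le_trans hcond'.2 (hanti _ _ hcond'.1)
      apply hub (j + 2) (by omega) (by omega)
      simpa using (by omega : j + 2 ≤ d (j + 1) + 1)
    · intro hle
      have hd1 : M - 1 ≤ d (M - 1) + 1 - 1 := by omega
      have h1 : j + 1 ≤ d (j + 1) := by
        have := hanti (j + 1) (M - 1) (by omega)
        omega
      have hmem : (j + 1) ∈ (List.range π.length).filter
          (fun i => decide (j + 1 ≤ i ∧ j + 1 ≤ π.getD i 0)) := by
        rw [List.mem_filter, List.mem_range]
        refine ⟨by omega, ?_⟩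
        simp only [decide_eq_true_eq]
        exact ⟨le_refl _, h1⟩
      intro h0
      rw [betaColCount, List.length_eq_zero_iff] at h0
      rw [h0] at hmem
      exact absurd hmem (fun h => List.not_mem_nil h)
  have hβ : (betaOf π).length = M - 1 := by
    rw [betaOf, List.filter_map, List.length_map]
    have hcg : ∀ j ∈ List.range π.length,
        ((fun c => c != 0) ∘ fun j => betaColCount π (j + 1)) j = decide (j < M - 1) := by
      intro j hj
      rw [List.mem_range] at hj
      have := hbeta_iff j hj
      simp only [Function.comp]
      rcases Nat.eq_zero_or_pos (betaColCount π (j + 1)) with hc | hc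
      · have h2 : ¬ (j < M - 1) := by
          intro h
          exact (this.mpr (by omega)) hc
        simp [hc, h2]
      · have h2 : j < M - 1 := by
          have := this.mp (Nat.pos_iff_ne_zero.mp hc)
          omega
        simp [Nat.pos_iff_ne_zero.mp hc, h2]
    rw [List.filter_congr hcg]
    exact filter_range_lt_length (M - 1) L (by omega)
  refine ⟨hβ, ?_⟩
  -- alpha
  have hα0 : (alphaOf π).length =
      ((List.range π.length).filter (fun i => decide (i + 1 ≤ π.getD i 0))).length :=
    length_filterMap_ite _ _ _
  have hαiff : ∀ i, i < L → i + 1 ≤ d i → i + 1 ≤ M := by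
    intro i hiL hi
    apply hub (i + 1) (by omega) (by omega)
    simpa using (by omega : i + 1 ≤ d i + 1)
  by_cases hcase : M ≤ d (M - 1)
  · right
    rw [hα0]
    have hcg : ∀ i ∈ List.range π.length,
        decide (i + 1 ≤ π.getD i 0) = decide (i < M) := by
      intro i hi
      rw [List.mem_range] at hi
      rw [decide_eq_decide]
      constructor
      · intro hc
        have hc' : i + 1 ≤ d i := hc
        have := hαiff i hi hc'
        omega
      · intro hiM
        have h1 : d (M - 1) ≤ d i := hanti i (M - 1) (by omega)
        show i + 1 ≤ d i
        omega
    rw [List.filter_congr hcg]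
    exact filter_range_lt_length M L hML
  · left
    rw [hα0]
    have hcg : ∀ i ∈ List.range π.length,
        decide (i + 1 ≤ π.getD i 0) = decide (i < M - 1) := by
      intro i hi
      rw [List.mem_range] at hi
      rw [decide_eq_decide]
      constructor
      · intro hc
        have hc' : i + 1 ≤ d i := hc
        have h1 := hαiff i hi hc'
        have h2 : i ≠ M - 1 := by
          intro h
          apply hcase
          rw [← h]
          exact le_trans (by omega) hc'
        omega
      · intro hiM
        have h1 : d (M - 1) ≤ d i := hanti i (M - 1) (by omega)
        show i + 1 ≤ d i
        omega
    rw [List.filter_congr hcg]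
    exact filter_range_lt_length (M - 1) L (by omega)
end

section
/- Every threshold graph with at least one vertex is a split graph, and moreover is an unbalanced split graph (it is not a balanced split graph). -/
/-- Every threshold graph with at least one vertex is a split graph, and is
an unbalanced split graph (it is not a balanced split graph). -/
theorem stmt3 {V : Type} [Fintype V] [Nonempty V] (G : SimpleGraph V)
    (h : IsThreshold G) :
    IsSplit G ∧ IsUnbalancedSplit G ∧ ¬ IsBalancedSplit G := by
  classical
  obtain ⟨t, a, ht, ha, hiff⟩ := h
  -- pairwise characterization of non-adjacency
  have not_adj_iff : ∀ u w : V, u ≠ w → (¬ G.Adj u w ↔ a u + a w ≤ t) := by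
    intro u w huw
    have hcoe : ((({u, w} : Finset V) : Set V)) = ({u, w} : Set V) := by simp
    have h2 := hiff ({u, w} : Finset V)
    rw [Finset.sum_pair huw] at h2
    rw [← h2]
    constructor
    · intro hn x hx y hy hxy
      rw [hcoe] at hx hy
      simp only [Set.mem_insert_iff, Set.mem_singleton_iff] at hx hy
      rcases hx with rfl | rfl <;> rcases hy with rfl | rfl <;>
        first
          | exact absurd rfl hxy
          | exact hn
          | exact fun h' => hn h'.symm
    · intro hind hadj
      exact hind (by rw [hcoe]; exact Set.mem_insert _ _)
        (by rw [hcoe]; exact Set.mem_insert_of_mem _ rfl) huw hadj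
  have adj_of : ∀ u w : V, u ≠ w → t < a u + a w → G.Adj u w := by
    intro u w huw hlt
    by_contra hn
    exact absurd ((not_adj_iff u w huw).1 hn) (not_le.2 hlt)
  -- key order on vertices
  set n := Fintype.card V with hn
  let e : V ≃ Fin n := Fintype.equivFin V
  let key : V → ℝ ×ₗ (Fin n) := fun v => toLex (a v, e v)
  have key_inj : Function.Injective key := by
    intro u v huv
    have : (ofLex (key u)).2 = (ofLex (key v)).2 := by rw [huv]
    exact e.injective this
  have key_a : ∀ u v : V, key u ≤ key v → a u ≤ a v := by
    intro u v huv
    rcases Prod.Lex.le_iff.1 huv with h1 | ⟨h1, _⟩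
    · exact le_of_lt h1
    · exact le_of_eq h1
  -- prefix sums
  let P : V → ℝ := fun v => ∑ w ∈ Finset.univ.filter (fun w => key w ≤ key v), a w
  have P_mono : ∀ u v : V, key u ≤ key v → P u ≤ P v := by
    intro u v huv
    apply Finset.sum_le_sum_of_subset_of_nonneg
    · intro x hx
      simp only [Finset.mem_filter, Finset.mem_univ, true_and] at hx ⊢
      exact le_trans hx huv
    · intro i _ _
      exact (ha i).le
  let S : Finset V := Finset.univ.filter (fun v => P v ≤ t)
  let K : Finset V := Finset.univ.filter (fun v => ¬ P v ≤ t)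
  have hmemS : ∀ v, v ∈ S ↔ P v ≤ t := by
    intro v; simp [S]
  have hmemK : ∀ v, v ∈ K ↔ ¬ P v ≤ t := by
    intro v; simp [K]
  have hSsum : ∑ v ∈ S, a v ≤ t := by
    rcases S.eq_empty_or_nonempty with he | hne
    · rw [he, Finset.sum_empty]; exact ht.le
    · obtain ⟨v0, hv0, hmax⟩ := S.exists_max_image key hne
      have hsub : S ⊆ Finset.univ.filter (fun w => key w ≤ key v0) := by
        intro x hx
        simp only [Finset.mem_filter, Finset.mem_univ, true_and]
        exact hmax x hx
      calc ∑ v ∈ S, a v ≤ P v0 :=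
            Finset.sum_le_sum_of_subset_of_nonneg hsub (fun i _ _ => (ha i).le)
        _ ≤ t := (hmemS v0).1 hv0
  have hSindep : IsIndepSet G (S : Set V) := (hiff S).2 hSsum
  have hKclique : G.IsClique (K : Set V) := by
    intro u hu w hw huw
    rw [Finset.mem_coe] at hu hw
    have hKne : K.Nonempty := ⟨u, hu⟩
    obtain ⟨u0, hu0, hmin⟩ := K.exists_min_image key hKne
    have hu0t : ¬ P u0 ≤ t := (hmemK u0).1 hu0
    have hu0S : u0 ∉ S := by
      rw [hmemS]; exact hu0t
    -- the prefix of u0 is exactly insert u0 S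
    have hprefix : Finset.univ.filter (fun w => key w ≤ key u0) = insert u0 S := by
      ext x
      simp only [Finset.mem_filter, Finset.mem_univ, true_and, Finset.mem_insert]
      constructor
      · intro hx
        by_cases hxt : P x ≤ t
        · exact Or.inr ((hmemS x).2 hxt)
        · have hxK : x ∈ K := (hmemK x).2 hxt
          have := hmin x hxK
          exact Or.inl (key_inj (le_antisymm hx this))
      · rintro (rfl | hxS)
        · exact le_rfl
        · by_contra hnx
          have h1 : key u0 ≤ key x := le_of_not_ge hnx
          have := le_trans (P_mono u0 x h1) ((hmemS x).1 hxS)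
          exact hu0t this
      -- end ext
    have hsum0 : t < a u0 + ∑ v ∈ S, a v := by
      have : P u0 = a u0 + ∑ v ∈ S, a v := by
        rw [show P u0 = ∑ w ∈ Finset.univ.filter (fun w => key w ≤ key u0), a w from rfl,
          hprefix, Finset.sum_insert hu0S]
      rw [← this]
      exact not_le.1 hu0t
    have hni : ¬ IsIndepSet G ((insert u0 S : Finset V) : Set V) := by
      intro hind
      have := (hiff _).1 hind
      rw [Finset.sum_insert hu0S] at this
      linarith
    simp only [IsIndepSet, Set.Pairwise] at hni
    push_neg at hni
    obtain ⟨x, hx, y, hy, hxy, hadj⟩ := hni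
    rw [Finset.mem_coe, Finset.mem_insert] at hx hy
    -- extract s ∈ S adjacent to u0
    have hex : ∃ s ∈ S, t < a u0 + a s := by
      rcases hx with rfl | hxS
      · rcases hy with rfl | hyS
        · exact absurd rfl hxy
        · refine ⟨y, hyS, ?_⟩
          by_contra hle
          exact (not_adj_iff x y hxy).2 (not_lt.1 hle) hadj
      · rcases hy with rfl | hyS
        · refine ⟨x, hxS, ?_⟩
          by_contra hle
          have : a y + a x ≤ t := by
            have := not_lt.1 hle; linarith
          exact (not_adj_iff x y hxy).2 (by linarith) hadj
        · exact absurd hadj (hSindep (Finset.mem_coe.2 hxS) (Finset.mem_coe.2 hyS) hxy)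
    obtain ⟨s, hsS, hts⟩ := hex
    have hsKey : key s ≤ key u0 := by
      have : s ∈ Finset.univ.filter (fun w => key w ≤ key u0) := by
        rw [hprefix]; exact Finset.mem_insert_of_mem hsS
      simpa using this
    have h1 : a s ≤ a u0 := key_a _ _ hsKey
    have h2 : a u0 ≤ a u := key_a _ _ (hmin u hu)
    have h3 : a u0 ≤ a w := key_a _ _ (hmin w hw)
    exact adj_of u w huw (by linarith)
  have hKS : IsKS G K S := by
    refine ⟨fun v => ?_, ?_, hKclique, hSindep⟩
    · by_cases hv : P v ≤ t
      · exact Or.inr ((hmemS v).2 hv)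
      · exact Or.inl ((hmemK v).2 hv)
    · rw [Finset.disjoint_left]
      intro x hxK hxS
      exact (hmemK x).1 hxK ((hmemS x).1 hxS)
  have hsplit : IsSplit G := ⟨K, S, hKS⟩
  -- bounds on cliqueNum and indepNum
  have clique_bdd : BddAbove {m | ∃ s : Finset V, G.IsNClique m s} := by
    refine ⟨Fintype.card V, ?_⟩
    rintro m ⟨s, hs⟩
    rw [← hs.card_eq]
    simpa using Finset.card_le_univ s
  have clique_le : ∀ s : Finset V, G.IsClique (s : Set V) → s.card ≤ cliqueNum G := by
    intro s hs
    exact le_csSup clique_bdd ⟨s, hs, rfl⟩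
  have indep_bdd : BddAbove {m | ∃ s : Finset V, IsIndepSet G (s : Set V) ∧ s.card = m} := by
    refine ⟨Fintype.card V, ?_⟩
    rintro m ⟨s, _, rfl⟩
    simpa using Finset.card_le_univ s
  have indep_le : ∀ s : Finset V, IsIndepSet G (s : Set V) → s.card ≤ indepNum G := by
    intro s hs
    exact le_csSup indep_bdd ⟨s, hs, rfl⟩
  have one_le_clique : 1 ≤ cliqueNum G := by
    obtain v := Classical.arbitrary V
    have h1 : G.IsClique (({v} : Finset V) : Set V) := by
      simp [SimpleGraph.IsClique]
    have := clique_le {v} h1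
    simpa using this
  have one_le_indep : 1 ≤ indepNum G := by
    obtain v := Classical.arbitrary V
    have h1 : IsIndepSet G (({v} : Finset V) : Set V) := by
      simp [IsIndepSet]
    have := indep_le {v} h1
    simpa using this
  -- no balanced partition
  have hnb : ¬ ∃ K S, IsKS G K S ∧ K.card = cliqueNum G ∧ S.card = indepNum G := by
    rintro ⟨K', S', ⟨hcov, hdisj, hKc, hSi⟩, hKcard, hScard⟩
    have hKne : K'.Nonempty := Finset.card_pos.1 (by omega)
    have hSne : S'.Nonempty := Finset.card_pos.1 (by omega)
    obtain ⟨smax, hsmaxS, hsmax⟩ := S'.exists_max_image a hSne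
    obtain ⟨vmin, hvminK, hvmin⟩ := K'.exists_min_image a hKne
    have hsK : smax ∉ K' := fun hmem => Finset.disjoint_left.1 hdisj hmem hsmaxS
    -- Step A : a smax + a vmin ≤ t
    have hnc : ¬ G.IsClique ((insert smax K' : Finset V) : Set V) := by
      intro hc
      have := clique_le _ hc
      rw [Finset.card_insert_of_notMem hsK, hKcard] at this
      omega
    simp only [SimpleGraph.IsClique, Set.Pairwise] at hnc
    push_neg at hnc
    obtain ⟨x, hx, y, hy, hxy, hnadj⟩ := hnc
    rw [Finset.mem_coe, Finset.mem_insert] at hx hy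
    have hstepA : a smax + a vmin ≤ t := by
      rcases hx with rfl | hxK
      · rcases hy with rfl | hyK
        · exact absurd rfl hxy
        · have hle := (not_adj_iff x y hxy).1 hnadj
          have := hvmin y hyK
          linarith
      · rcases hy with rfl | hyK
        · have hle := (not_adj_iff x y hxy).1 hnadj
          have := hvmin x hxK
          linarith
        · exact absurd (hKc (Finset.mem_coe.2 hxK) (Finset.mem_coe.2 hyK) hxy) hnadj
    -- Step B : t < a vmin + a smax
    have hvS : vmin ∉ S' := fun hmem => Finset.disjoint_left.1 hdisj hvminK hmem
    have hni : ¬ IsIndepSet G ((insert vmin S' : Finset V) : Set V) := by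
      intro hind
      have := indep_le _ hind
      rw [Finset.card_insert_of_notMem hvS, hScard] at this
      omega
    simp only [IsIndepSet, Set.Pairwise] at hni
    push_neg at hni
    obtain ⟨x, hx, y, hy, hxy, hadj⟩ := hni
    rw [Finset.mem_coe, Finset.mem_insert] at hx hy
    have hex : ∃ s ∈ S', t < a vmin + a s := by
      rcases hx with rfl | hxS
      · rcases hy with rfl | hyS
        · exact absurd rfl hxy
        · refine ⟨y, hyS, ?_⟩
          by_contra hle
          exact (not_adj_iff x y hxy).2 (not_lt.1 hle) hadj
      · rcases hy with rfl | hyS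
        · refine ⟨x, hxS, ?_⟩
          by_contra hle
          have h0 : a x + a y ≤ t := by
            have := not_lt.1 hle; linarith
          exact (not_adj_iff x y hxy).2 h0 hadj
        · exact absurd hadj (hSi (Finset.mem_coe.2 hxS) (Finset.mem_coe.2 hyS) hxy)
    obtain ⟨s, hsS, hts⟩ := hex
    have := hsmax s hsS
    linarith
  exact ⟨hsplit, ⟨hsplit, hnb⟩, fun hb => hnb hb.2⟩
end

section
/- If k ≥ 1 and n ≥ binom(k+1, 2), then τ_k(n) ∈ Dis_k(n) and τ_k(n) ⪯ α for every α ∈ Dis_k(n); that is, τ_k(n) is the unique minimum element of Dis_k(n) under majorization. -/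
lemma list_sum_range (f : ℕ → ℕ) : ∀ j, ((List.range j).map f).sum = ∑ i ∈ Finset.range j, f i := by
  intro j
  induction j with
  | zero => simp
  | succ j ih => rw [List.range_succ, Finset.sum_range_succ, List.map_append, List.sum_append, ih]; simp

lemma sum_range_ite (j r : ℕ) : ∑ i ∈ Finset.range j, (if i < r then 1 else 0) = min j r := by
  induction j with
  | zero => simp
  | succ j ih => rw [Finset.sum_range_succ, ih]; split_ifs <;> omega

lemma sum_take_getD (γ : List ℕ) : ∀ j ≤ γ.length, (γ.take j).sum = ∑ i ∈ Finset.range j, γ.getD i 0 := by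
  intro j hj
  induction j with
  | zero => simp
  | succ j ih =>
    rw [List.sum_take_succ γ j (by omega), Finset.sum_range_succ, ih (by omega),
      List.getD_eq_getElem γ 0 (by omega)]

lemma getD_gap_aux (γ : List ℕ) (h : γ.Pairwise (· > ·)) (i : ℕ) :
    ∀ t, i + t < γ.length → γ.getD (i + t) 0 + t ≤ γ.getD i 0 := by
  intro t
  induction t with
  | zero => simp
  | succ t iht =>
    intro hl
    have h1 : γ.getD (i + t + 1) 0 < γ.getD (i + t) 0 := by
      rw [List.getD_eq_getElem γ 0 (by omega), List.getD_eq_getElem γ 0 (by omega)]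
      exact h.rel_get_of_lt (a := ⟨i + t, by omega⟩) (b := ⟨i + t + 1, by omega⟩) (by simp)
    have h2 := iht (by omega)
    have h3 : i + (t + 1) = i + t + 1 := by omega
    rw [h3]
    omega

lemma getD_gap (γ : List ℕ) (h : γ.Pairwise (· > ·)) (i i' : ℕ) (hii : i ≤ i')
    (hl : i' < γ.length) : γ.getD i' 0 + (i' - i) ≤ γ.getD i 0 := by
  obtain ⟨t, rfl⟩ : ∃ t, i' = i + t := ⟨i' - i, by omega⟩
  have := getD_gap_aux γ h i t hl
  omega

lemma core_ineq (j s q r mn S a : ℕ) (hj : 1 ≤ j)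
    (hn : 2 * mn = (j + s) * (j + s + 1) + 2 * (q * (j + s)) + 2 * r)
    (H1 : 2 * (j * a) + j * (j - 1) ≤ 2 * S)
    (H2 : 2 * mn + s * (s + 1) ≤ 2 * S + 2 * (s * a)) :
    j * (j + 2 * s + 1) + 2 * (j * q) + 2 * min j r ≤ 2 * S := by
  obtain ⟨t, rfl⟩ : ∃ t, j = t + 1 := ⟨j - 1, by omega⟩
  simp only [Nat.add_sub_cancel] at H1
  rcases le_or_gt a (s + 1 + q) with hc | hc
  · -- use H2
    have hmul : 2 * (s * a) ≤ 2 * (s * (s + 1 + q)) := by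
      have := Nat.mul_le_mul_left s hc; omega
    have hmin : min (t + 1) r ≤ r := Nat.min_le_right _ _
    nlinarith [H2, hn, hmul, hmin]
  · -- use H1
    have hmul : (t + 1) * (s + q + 2) ≤ (t + 1) * a := Nat.mul_le_mul_left _ (by omega)
    have hmin : min (t + 1) r ≤ t + 1 := Nat.min_le_left _ _
    nlinarith [H1, hmul, hmin]

lemma two_choose (k : ℕ) : 2 * Nat.choose (k + 1) 2 = k * (k + 1) := by
  rw [Nat.choose_two_right]
  simp only [Nat.add_sub_cancel]
  rw [Nat.mul_div_cancel' (by rw [mul_comm]; exact (Nat.even_mul_succ_self k).two_dvd)]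
  ring

lemma tau_length (n k : ℕ) : (tauMin n k).length = k := by simp [tauMin]

lemma tau_take_sum (n k j : ℕ) (hj : j ≤ k) :
    2 * ((tauMin n k).take j).sum =
      2 * (j * (k - j + 1)) + j * (j - 1) + 2 * (j * ((n - Nat.choose (k + 1) 2) / k)) +
        2 * min j ((n - Nat.choose (k + 1) 2) % k) := by
  set q := (n - Nat.choose (k + 1) 2) / k
  set r := (n - Nat.choose (k + 1) 2) % k
  have h1 : (tauMin n k).take j =
      (List.range j).map (fun i => (k - i) + q + (if i < r then 1 else 0)) := by
    rw [tauMin, ← List.map_take, List.take_range, Nat.min_eq_left hj]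
  rw [h1, list_sum_range]
  have h3 : ∑ i ∈ Finset.range j, (k - i) = j * (k - j + 1) + ∑ i ∈ Finset.range j, i := by
    rw [← Finset.sum_range_reflect (fun i => k - i) j]
    rw [show (j * (k - j + 1) : ℕ) = ∑ _i ∈ Finset.range j, (k - j + 1) by
      rw [Finset.sum_const, Finset.card_range]; ring, ← Finset.sum_add_distrib]
    refine Finset.sum_congr rfl fun i hi => ?_
    simp only [Finset.mem_range] at hi; omega
  have h4 : ∑ i ∈ Finset.range j, ((k - i) + q + (if i < r then 1 else 0)) =
      (∑ i ∈ Finset.range j, (k - i)) + j * q + min j r := by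
    rw [Finset.sum_add_distrib, Finset.sum_add_distrib, Finset.sum_const, Finset.card_range,
      sum_range_ite]; ring
  rw [h4, h3]
  have h5 := Finset.sum_range_id_mul_two j
  ring_nf
  ring_nf at h5
  omega

lemma core_ineq' (k j q r nn S a : ℕ) (hj : 1 ≤ j) (hjk : j ≤ k)
    (hn : 2 * nn = k * (k + 1) + 2 * (q * k) + 2 * r)
    (H1 : 2 * (j * a) + j * (j - 1) ≤ 2 * S)
    (H2 : 2 * nn + (k - j) * (k - j + 1) ≤ 2 * S + 2 * ((k - j) * a)) :
    2 * (j * (k - j + 1)) + j * (j - 1) + 2 * (j * q) + 2 * min j r ≤ 2 * S := by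
  obtain ⟨s, rfl⟩ : ∃ s, k = j + s := ⟨k - j, by omega⟩
  simp only [Nat.add_sub_cancel_left] at H2 ⊢
  obtain ⟨t, rfl⟩ : ∃ t, j = t + 1 := ⟨j - 1, by omega⟩
  simp only [Nat.add_sub_cancel] at H1 ⊢
  rcases le_or_gt a (s + 1 + q) with hc | hc
  · have hmul : 2 * (s * a) ≤ 2 * (s * (s + 1 + q)) := by
      have := Nat.mul_le_mul_left s hc; omega
    have hmin : min (t + 1) r ≤ r := Nat.min_le_right _ _
    nlinarith [H2, hn, hmul, hmin]
  · have hmul : (t + 1) * (s + q + 2) ≤ (t + 1) * a := Nat.mul_le_mul_left _ (by omega)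
    have hmin : min (t + 1) r ≤ t + 1 := Nat.min_le_left _ _
    nlinarith [H1, hmul, hmin]

lemma tau_sorted (n k : ℕ) : (tauMin n k).Pairwise (· > ·) := by
  rw [tauMin, List.pairwise_map]
  refine (List.pairwise_lt_range (n := k)).imp_of_mem ?_
  intro a b ha hb hab
  simp only [List.mem_range] at ha hb
  simp only [gt_iff_lt]
  generalize (n - Nat.choose (k + 1) 2) / k = q
  generalize (n - Nat.choose (k + 1) 2) % k = r
  split_ifs <;> omega

lemma tau_pos (n k : ℕ) : ∀ x ∈ tauMin n k, 0 < x := by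
  intro x hx
  rw [tauMin, List.mem_map] at hx
  obtain ⟨i, hi, rfl⟩ := hx
  simp only [List.mem_range] at hi
  generalize (n - Nat.choose (k + 1) 2) / k = q
  generalize (n - Nat.choose (k + 1) 2) % k = r
  split_ifs <;> omega

lemma tau_sum (n k : ℕ) (hk : 1 ≤ k) (hn : Nat.choose (k + 1) 2 ≤ n) :
    (tauMin n k).sum = n := by
  have h := tau_take_sum n k k le_rfl
  rw [List.take_of_length_le (by rw [tau_length])] at h
  have hc := two_choose k
  have hd := Nat.div_add_mod (n - Nat.choose (k + 1) 2) k
  have hr : (n - Nat.choose (k + 1) 2) % k < k := Nat.mod_lt _ (by omega)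
  have hnc : n - Nat.choose (k + 1) 2 + Nat.choose (k + 1) 2 = n := Nat.sub_add_cancel hn
  set q := (n - Nat.choose (k + 1) 2) / k with hqdef
  set r := (n - Nat.choose (k + 1) 2) % k with hrdef
  set m := n - Nat.choose (k + 1) 2 with hmdef
  clear_value q r m
  have hmin : min k r = r := by omega
  have hkk : k - k + 1 = 1 := by omega
  rw [hmin, hkk] at h
  have e1 : 2 * (k * 1) + k * (k - 1) = k * (k + 1) := by
    obtain ⟨m', rfl⟩ : ∃ m', k = m' + 1 := ⟨k - 1, by omega⟩
    simp only [Nat.add_sub_cancel]; ring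
  have : 2 * (tauMin n k).sum = 2 * n := by linarith
  omega

lemma drop_sum_getD (γ : List ℕ) (j : ℕ) (hj : j ≤ γ.length) :
    (γ.drop j).sum = ∑ t ∈ Finset.range (γ.length - j), γ.getD (j + t) 0 := by
  have hlen : (γ.drop j).length = γ.length - j := by simp
  have h := sum_take_getD (γ.drop j) (γ.length - j) (by omega)
  rw [List.take_of_length_le (by omega)] at h
  rw [h]
  refine Finset.sum_congr rfl fun t ht => ?_
  simp only [Finset.mem_range] at ht
  rw [List.getD_eq_getElem _ 0 (by omega), List.getD_eq_getElem _ 0 (by omega),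
    List.getElem_drop]

lemma prefix_bound (n k : ℕ) (hk : 1 ≤ k) (hn : Nat.choose (k + 1) 2 ≤ n)
    (γ : List ℕ) (hs : γ.Pairwise (· > ·)) (hsum : γ.sum = n) (hlen : γ.length = k)
    (j : ℕ) (hj : j ≤ k) : ((tauMin n k).take j).sum ≤ (γ.take j).sum := by
  rcases Nat.eq_zero_or_pos j with rfl | hj1
  · simp
  have htau := tau_take_sum n k j hj
  have hc := two_choose k
  have hd := Nat.div_add_mod (n - Nat.choose (k + 1) 2) k
  have hnc : n - Nat.choose (k + 1) 2 + Nat.choose (k + 1) 2 = n := Nat.sub_add_cancel hn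
  set q := (n - Nat.choose (k + 1) 2) / k with hqdef
  set r := (n - Nat.choose (k + 1) 2) % k with hrdef
  set m := n - Nat.choose (k + 1) 2 with hmdef
  clear_value q r m
  set a := γ.getD (j - 1) 0 with ha
  set S := (γ.take j).sum with hS
  -- H1
  have hSsum : S = ∑ i ∈ Finset.range j, γ.getD i 0 := sum_take_getD γ j (by omega)
  have hpt1 : ∀ i ∈ Finset.range j, a + (j - 1 - i) ≤ γ.getD i 0 := by
    intro i hi
    simp only [Finset.mem_range] at hi
    have := getD_gap γ hs i (j - 1) (by omega) (by omega)
    omega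
  have hsum1 : ∑ i ∈ Finset.range j, (a + (j - 1 - i)) ≤ S := by
    rw [hSsum]; exact Finset.sum_le_sum hpt1
  have hsplit1 : ∑ i ∈ Finset.range j, (a + (j - 1 - i)) =
      j * a + ∑ i ∈ Finset.range j, i := by
    rw [Finset.sum_add_distrib, Finset.sum_const, Finset.card_range, smul_eq_mul,
      Finset.sum_range_reflect (fun i => i) j]
  have hg := Finset.sum_range_id_mul_two j
  have H1 : 2 * (j * a) + j * (j - 1) ≤ 2 * S := by
    have h' := hsum1; rw [hsplit1] at h'; linarith
  -- H2
  have hD : S + (γ.drop j).sum = n := by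
    rw [hS, List.sum_take_add_sum_drop, hsum]
  have hdrop := drop_sum_getD γ j (by omega)
  rw [hlen] at hdrop
  have hpt2 : ∀ t ∈ Finset.range (k - j), γ.getD (j + t) 0 + (t + 1) ≤ a := by
    intro t ht
    simp only [Finset.mem_range] at ht
    have := getD_gap γ hs (j - 1) (j + t) (by omega) (by omega)
    omega
  have hsum2 : ∑ t ∈ Finset.range (k - j), (γ.getD (j + t) 0 + (t + 1)) ≤ (k - j) * a := by
    calc ∑ t ∈ Finset.range (k - j), (γ.getD (j + t) 0 + (t + 1))
        ≤ ∑ _t ∈ Finset.range (k - j), a := Finset.sum_le_sum hpt2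
      _ = (k - j) * a := by rw [Finset.sum_const, Finset.card_range, smul_eq_mul]
  have hsplit2 : ∑ t ∈ Finset.range (k - j), (γ.getD (j + t) 0 + (t + 1)) =
      (γ.drop j).sum + ((∑ t ∈ Finset.range (k - j), t) + (k - j)) := by
    rw [Finset.sum_add_distrib, Finset.sum_add_distrib, Finset.sum_const, Finset.card_range,
      smul_eq_mul, hdrop, mul_one]
  have hg2 := Finset.sum_range_id_mul_two (k - j)
  have H2 : 2 * n + (k - j) * (k - j + 1) ≤ 2 * S + 2 * ((k - j) * a) := by
    have hsq : (k - j) * ((k - j) + 1) = (k - j) * ((k - j) - 1) + 2 * (k - j) := by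
      rcases Nat.eq_zero_or_pos (k - j) with h0 | h0
      · rw [h0]
      · obtain ⟨m', hm'⟩ : ∃ m', k - j = m' + 1 := ⟨k - j - 1, by omega⟩
        rw [hm']; simp only [Nat.add_sub_cancel]; ring
    have h' := hsum2; rw [hsplit2] at h'
    linarith
  have hmc : q * k = k * q := mul_comm q k
  have hnn : 2 * n = k * (k + 1) + 2 * (q * k) + 2 * r := by linarith
  have hcore := core_ineq' k j q r n S a hj1 hj hnn H1 H2
  linarith

lemma eq_of_take_sums : ∀ (L M : List ℕ), L.length = M.length →
    (∀ j ≤ L.length, (L.take j).sum = (M.take j).sum) → L = M := by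
  intro L
  induction L with
  | nil =>
    intro M h _
    have : M.length = 0 := by simpa using h.symm
    exact (List.length_eq_zero_iff.mp this).symm
  | cons a L ih =>
    intro M hlen hsum
    cases M with
    | nil => simp at hlen
    | cons b M =>
      have h1 := hsum 1 (by simp)
      simp [List.take_succ] at h1
      subst h1
      have h2 : L = M := by
        refine ih M (by simpa using hlen) fun j hj => ?_
        have := hsum (j + 1) (by simpa using hj)
        simpa using this
      rw [h2]

/-- For k ≥ 1 and n ≥ C(k+1,2), τ_k(n) is the unique minimum element of
Dis_k(n) under majorization. -/
theorem stmt6 (n k : ℕ) (hk : 1 ≤ k) (hn : Nat.choose (k + 1) 2 ≤ n) :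
    DisPartK n k (tauMin n k) ∧ (∀ α, DisPartK n k α → Majorizes α (tauMin n k)) ∧
      ∀ μ, DisPartK n k μ → (∀ α, DisPartK n k α → Majorizes α μ) → μ = tauMin n k := by
  have hlen := tau_length n k
  have htauDis : DisPartK n k (tauMin n k) :=
    ⟨⟨tau_sorted n k, tau_pos n k, tau_sum n k hk hn⟩, hlen⟩
  have hmaj : ∀ α, DisPartK n k α → Majorizes α (tauMin n k) := by
    rintro α ⟨⟨hαs, hαp, hαsum⟩, hαlen⟩
    refine ⟨by rw [hαsum, tau_sum n k hk hn], ?_⟩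
    intro j hjle
    rw [hlen, hαlen] at hjle
    exact prefix_bound n k hk hn α hαs hαsum hαlen j (by omega)
  refine ⟨htauDis, hmaj, ?_⟩
  intro μ hμ hminμ
  have h1 := hminμ (tauMin n k) htauDis
  have h2 := hmaj μ hμ
  refine eq_of_take_sums μ (tauMin n k) (by rw [hμ.2, hlen]) ?_
  intro j hjle
  have hjk : j ≤ k := hμ.2 ▸ hjle
  refine le_antisymm ?_ ?_
  · exact h1.2 j (by rw [hμ.2, hlen]; simpa using hjk)
  · exact h2.2 j (by rw [hμ.2, hlen]; simpa using hjk)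
end

section
/- Let n, j, k be positive integers with k > j and n ≥ binom(k+1, 2). Then τ_k(n) ⪯ τ_j(n) and τ'_k(n) ⪯ τ'_j(n) in the majorization order. -/
lemma lsum (f : ℕ → ℕ) (n : ℕ) : ((List.range n).map f).sum = ∑ i ∈ Finset.range n, f i := rfl

lemma take_map_range_sum (f : ℕ → ℕ) (t m : ℕ) (h : t ≤ m) :
    (((List.range m).map f).take t).sum = ∑ i ∈ Finset.range t, f i := by
  rw [← List.map_take, List.take_range, min_eq_left h, lsum]

lemma sum_sub_shift (s m : ℕ) (h : s ≤ m) :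
    ∑ i ∈ Finset.range s, (m + 1 - i) = (∑ i ∈ Finset.range s, (m - i)) + s := by
  have : ∀ i ∈ Finset.range s, m + 1 - i = (m - i) + 1 := fun i hi => by
    have := Finset.mem_range.mp hi; omega
  rw [Finset.sum_congr rfl this, Finset.sum_add_distrib]
  simp

lemma sum_range_sub (M : ℕ) : ∑ i ∈ Finset.range M, (M - i) = Nat.choose (M + 1) 2 := by
  induction M with
  | zero => simp
  | succ M ih =>
    rw [Finset.sum_range_succ, sum_sub_shift M M le_rfl, ih,
      Nat.choose_succ_succ (M + 1), Nat.choose_one_right]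
    simp only [show Nat.succ 1 = 2 from rfl]
    omega

lemma sum_ite_lt (t r : ℕ) : ∑ i ∈ Finset.range t, (if i < r then 1 else 0) = min r t := by
  induction t with
  | zero => simp
  | succ t ih =>
    rw [Finset.sum_range_succ, ih]
    by_cases h : t < r <;> simp [h] <;> omega

lemma div_ite' (N m i : ℕ) (hm : 0 < m) (hi : i < m) :
    N / m + (if i < N % m then 1 else 0) = (N + (m - 1 - i)) / m := by
  have h := Nat.div_add_mod N m
  set q := N / m; set r := N % m
  have hr : r < m := Nat.mod_lt _ hm
  have hN : N + (m - 1 - i) = m * q + (r + (m - 1 - i)) := by omega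
  rw [hN, Nat.mul_add_div hm]
  by_cases hir : i < r
  · have h1 : (r + (m - 1 - i)) / m = 1 := by
      have : r + (m - 1 - i) = m + (r - 1 - i) := by omega
      rw [this, Nat.add_div_left _ hm, Nat.div_eq_of_lt (by omega)]
    simp [hir, h1]
  · have h0 : (r + (m - 1 - i)) / m = 0 := Nat.div_eq_of_lt (by omega)
    simp [hir, h0]

lemma rev_range (n : ℕ) : (List.range n).reverse = (List.range n).map (fun i => n - 1 - i) := by
  induction n with
  | zero => simp
  | succ n ih =>
    conv_lhs => rw [List.range_succ]
    rw [List.reverse_append]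
    conv_rhs => rw [List.range_succ_eq_map]
    simp only [List.reverse_cons, List.reverse_nil, List.nil_append, List.singleton_append,
      List.map_cons, List.map_map]
    rw [ih]
    congr 1
    exact List.map_congr_left fun i hi => by
      have := List.mem_range.mp hi; simp; omega

lemma choose_pascal (m : ℕ) : Nat.choose (m + 1) 2 = Nat.choose m 2 + m := by
  have h := Nat.choose_succ_succ m 1
  rw [Nat.choose_one_right] at h
  norm_num at h ⊢
  omega

lemma tauMin_length (n m : ℕ) : (tauMin n m).length = m := by simp [tauMin]

lemma tauMax_length (n m : ℕ) (hm : 1 ≤ m) : (tauMax n m).length = m := by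
  simp [tauMax]; omega

lemma tauMin_take (n m t : ℕ) (ht : t ≤ m) :
    ((tauMin n m).take t).sum = ∑ i ∈ Finset.range t,
      ((m - i) + (n - Nat.choose (m + 1) 2) / m +
        (if i < (n - Nat.choose (m + 1) 2) % m then 1 else 0)) :=
  take_map_range_sum _ _ _ ht

lemma tauMin_sum (n m : ℕ) (hm : 0 < m) (hn : Nat.choose (m + 1) 2 ≤ n) :
    (tauMin n m).sum = n := by
  have h := tauMin_take n m m le_rfl
  rw [List.take_of_length_le (le_of_eq (tauMin_length n m))] at h
  rw [h, Finset.sum_add_distrib, Finset.sum_add_distrib, sum_range_sub, sum_ite_lt,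
    Finset.sum_const, Finset.card_range, smul_eq_mul]
  have h1 := Nat.div_add_mod (n - Nat.choose (m + 1) 2) m
  have h2 : (n - Nat.choose (m + 1) 2) % m < m := Nat.mod_lt _ hm
  rw [min_eq_left h2.le]
  omega

lemma tauMin_part_anti (n m i : ℕ) (hm : 0 < m) (hi : i < m)
    (hn : Nat.choose (m + 2) 2 ≤ n) :
    (m + 1 - i) + (n - Nat.choose (m + 2) 2) / (m + 1) +
      (if i < (n - Nat.choose (m + 2) 2) % (m + 1) then 1 else 0)
    ≤ (m - i) + (n - Nat.choose (m + 1) 2) / m +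
      (if i < (n - Nat.choose (m + 1) 2) % m then 1 else 0) := by
  rw [add_assoc, div_ite' _ _ _ (by omega) (by omega), add_assoc, div_ite' _ _ _ hm hi]
  have hP : Nat.choose (m + 2) 2 = Nat.choose (m + 1) 2 + (m + 1) := choose_pascal (m + 1)
  set A := n - Nat.choose (m + 1) 2 with hAdef
  have hA2 : m + 1 ≤ A := by omega
  have hA1 : n - Nat.choose (m + 2) 2 = A - (m + 1) := by omega
  rw [hA1]
  have e1 : A - (m + 1) + (m + 1 - 1 - i) = A - 1 - i := by omega
  have e2 : A + (m - 1 - i) = (A - 1 - i) + m := by omega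
  rw [e1, e2, Nat.add_div_right _ hm]
  have hd : (A - 1 - i) / (m + 1) ≤ (A - 1 - i) / m :=
    Nat.div_le_div_left (Nat.le_succ m) hm
  omega

lemma tauMin_step (n m t : ℕ) (hm : 0 < m) (ht : t ≤ m) (hn : Nat.choose (m + 2) 2 ≤ n) :
    ((tauMin n (m + 1)).take t).sum ≤ ((tauMin n m).take t).sum := by
  rw [tauMin_take n (m + 1) t (by omega), tauMin_take n m t ht]
  exact Finset.sum_le_sum fun i hi =>
    tauMin_part_anti n m i hm (lt_of_lt_of_le (Finset.mem_range.mp hi) ht) hn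

lemma tauMax_tail (m : ℕ) : (List.range (m - 1)).reverse.map (· + 1) =
    (List.range (m - 1)).map (fun i => (m - 1 - 1 - i) + 1) := by
  rw [rev_range, List.map_map]; rfl

lemma tauMax_take (n m t : ℕ) (ht : t + 1 ≤ m) :
    ((tauMax n m).take (t + 1)).sum =
      (n - Nat.choose m 2) + ∑ i ∈ Finset.range t, ((m - 1 - 1 - i) + 1) := by
  unfold tauMax
  rw [List.take_succ_cons, List.sum_cons, tauMax_tail,
    take_map_range_sum _ _ _ (by omega : t ≤ m - 1)]

lemma tauMax_sum (n m : ℕ) (hm : 1 ≤ m) (hn : Nat.choose m 2 ≤ n) :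
    (tauMax n m).sum = n := by
  have h := tauMax_take n m (m - 1) (by omega)
  rw [show m - 1 + 1 = m from by omega, List.take_of_length_le (le_of_eq (tauMax_length n m hm))] at h
  rw [h]
  have : ∀ i ∈ Finset.range (m - 1), (m - 1 - 1 - i) + 1 = (m - 1) - i := fun i hi => by
    have := Finset.mem_range.mp hi; omega
  rw [Finset.sum_congr rfl this, sum_range_sub, show m - 1 + 1 = m from by omega]
  omega

lemma tauMax_step (n m t : ℕ) (hm : 1 ≤ m) (ht : t ≤ m) (hn : Nat.choose (m + 1) 2 ≤ n) :
    ((tauMax n (m + 1)).take t).sum ≤ ((tauMax n m).take t).sum := by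
  cases t with
  | zero => simp
  | succ s =>
    rw [tauMax_take n (m + 1) s (by omega), tauMax_take n m s ht]
    have hshift : ∀ i ∈ Finset.range s, (m + 1 - 1 - 1 - i) + 1 = ((m - 1 - 1 - i) + 1) + 1 :=
      fun i hi => by have := Finset.mem_range.mp hi; omega
    rw [Finset.sum_congr rfl hshift, Finset.sum_add_distrib, Finset.sum_const,
      Finset.card_range, smul_eq_mul, mul_one]
    have hP := choose_pascal m
    have hc : Nat.choose m 2 ≤ n := by omega
    omega


lemma main_aux (n j : ℕ) (hj : 1 ≤ j) : ∀ m, j ≤ m → Nat.choose (m + 1) 2 ≤ n →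
    (∀ t ≤ j, ((tauMin n m).take t).sum ≤ ((tauMin n j).take t).sum) ∧
    (∀ t ≤ j, ((tauMax n m).take t).sum ≤ ((tauMax n j).take t).sum) := by
  intro m hm
  induction m, hm using Nat.le_induction with
  | base => exact fun _ => ⟨fun t _ => le_rfl, fun t _ => le_rfl⟩
  | succ m hm ih =>
    intro hn
    have h1 : Nat.choose (m + 1) 2 ≤ n :=
      le_trans (Nat.choose_le_choose 2 (by omega)) hn
    obtain ⟨ih1, ih2⟩ := ih h1
    refine ⟨fun t ht => le_trans ?_ (ih1 t ht), fun t ht => le_trans ?_ (ih2 t ht)⟩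
    · exact tauMin_step n m t (by omega) (le_trans ht hm) hn
    · exact tauMax_step n m t (by omega) (le_trans ht hm) h1


/-- For positive integers j < k with n ≥ C(k+1,2), τ_k(n) ⪯ τ_j(n) and
τ'_k(n) ⪯ τ'_j(n) under majorization. -/
theorem stmt7 (n j k : ℕ) (hj : 1 ≤ j) (hjk : j < k) (hn : Nat.choose (k + 1) 2 ≤ n) :
    Majorizes (tauMin n j) (tauMin n k) ∧ Majorizes (tauMax n j) (tauMax n k) := by
  obtain ⟨h1, h2⟩ := main_aux n j hj k (le_of_lt hjk) hn
  have hk : 1 ≤ k := by omega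
  have hcj : Nat.choose (j + 1) 2 ≤ n := le_trans (Nat.choose_le_choose 2 (by omega)) hn
  have hcj' : Nat.choose j 2 ≤ n := le_trans (Nat.choose_le_choose 2 (by omega)) hn
  have hck : Nat.choose k 2 ≤ n := le_trans (Nat.choose_le_choose 2 (by omega)) hn
  refine ⟨⟨?_, fun t ht => ?_⟩, ⟨?_, fun t ht => ?_⟩⟩
  · rw [tauMin_sum n j hj hcj, tauMin_sum n k hk hn]
  · refine h1 t ?_
    rw [tauMin_length, tauMin_length] at ht
    omega
  · rw [tauMax_sum n j hj hcj', tauMax_sum n k hk hck]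
  · refine h2 t ?_
    rw [tauMax_length n k hk, tauMax_length n j hj] at ht
    omega
end

section
/- A partition π is the degree sequence of some split graph with no isolated vertices if and only if [α(π)|β(π)] is an S-block, i.e., if and only if α(π) and β(π) are partitions of the same integer and β(π) ⪰ α(π). -/
namespace St9

open Finset

/-- degree function of the partition list -/
def dfn (π : List ℕ) (i : ℕ) : ℕ := π.getD i 0

variable {π : List ℕ}

lemma dfn_zero (h : π.length ≤ i) : dfn π i = 0 := List.getD_eq_default _ _ h

lemma dfn_pos (hπ : IsPartition π) (h : i < π.length) : 0 < dfn π i := by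
  have := hπ.2 (π.getD i 0) ?_
  · exact this
  · rw [List.getD_eq_getElem _ _ h]; exact List.getElem_mem _

lemma dfn_anti (hπ : IsPartition π) : Antitone (dfn π) := by
  intro i j hij
  rcases Nat.lt_or_ge j π.length with hj | hj
  · have hi : i < π.length := lt_of_le_of_lt hij hj
    unfold dfn
    rw [List.getD_eq_getElem _ _ hj, List.getD_eq_getElem _ _ hi]
    rcases Nat.eq_or_lt_of_le hij with rfl | hlt
    · exact le_refl _
    · exact List.pairwise_iff_getElem.mp hπ.1 i j hi hj hlt
  · rw [dfn_zero hj]; exact Nat.zero_le _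

lemma exDur (π : List ℕ) : ∃ i, dfn π i < i + 1 :=
  ⟨π.length, by simp [dfn_zero (le_refl π.length)]⟩

/-- Durfee number: least `i` with `d i < i + 1`. -/
def Dur (π : List ℕ) : ℕ := Nat.find (exDur π)

lemma Dur_lt (h : i < Dur π) : i + 1 ≤ dfn π i := by
  unfold Dur at h
  have := Nat.find_min (exDur π) h
  omega

lemma Dur_spec : dfn π (Dur π) ≤ Dur π := by
  unfold Dur
  have := Nat.find_spec (exDur π)
  omega

lemma Dur_le_len : Dur π ≤ π.length := by
  unfold Dur
  exact Nat.find_le (by simp [dfn_zero (le_refl π.length)])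

lemma dfn_le_of_Dur_le (hπ : IsPartition π) (h : Dur π ≤ i) : dfn π i ≤ i :=
  le_trans (le_trans (dfn_anti hπ h) Dur_spec) h

lemma dfn_ge_Dur (hπ : IsPartition π) (h : i < Dur π) : Dur π ≤ dfn π i := by
  rcases Nat.eq_zero_or_pos (Dur π) with h0 | h0
  · omega
  · have h1 : Dur π - 1 < Dur π := by omega
    have := Dur_lt h1
    have h2 := dfn_anti hπ (show i ≤ Dur π - 1 by omega)
    omega

end St9
namespace St9
open Finset

variable {π : List ℕ}

lemma list_sum_range (f : ℕ → ℕ) (n : ℕ) :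
    ((List.range n).map f).sum = ∑ i ∈ Finset.range n, f i := by
  simp [Finset.sum_range, Finset.range, Multiset.range]

lemma filterMap_eq_map_of (l : List ℕ) (f : ℕ → Option ℕ) (g : ℕ → ℕ)
    (h : ∀ a ∈ l, f a = some (g a)) : l.filterMap f = l.map g := by
  induction l with
  | nil => rfl
  | cons a l ih =>
      rw [List.filterMap_cons, h a List.mem_cons_self, List.map_cons,
        ih (fun b hb => h b (List.mem_cons_of_mem a hb))]

lemma alphaOf_eq (hπ : IsPartition π) : alphaOf π = (List.range (Dur π)).map (fun i => dfn π i - i) := by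
  unfold alphaOf
  have hlen : π.length = Dur π + (π.length - Dur π) := by
    have := @Dur_le_len π; omega
  rw [hlen, List.range_add, List.filterMap_append]
  have h1 : (List.range (Dur π)).filterMap
      (fun i => if i + 1 ≤ π.getD i 0 then some (π.getD i 0 - i) else none) =
      (List.range (Dur π)).map (fun i => dfn π i - i) := by
    apply filterMap_eq_map_of
    intro a ha
    rw [List.mem_range] at ha
    have := Dur_lt ha
    simp only [dfn] at *
    rw [if_pos this]
  have h2 : ((List.range (π.length - Dur π)).map (fun x => Dur π + x)).filterMap
      (fun i => if i + 1 ≤ π.getD i 0 then some (π.getD i 0 - i) else none) = [] := by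
    rw [List.filterMap_eq_nil_iff]
    intro a ha
    simp only [List.mem_map] at ha
    obtain ⟨x, _, rfl⟩ := ha
    have h3 : dfn π (Dur π + x) ≤ dfn π (Dur π) := dfn_anti hπ (Nat.le_add_right _ _)
    have h4 := @Dur_spec π
    simp only [dfn] at h3 h4 ⊢
    rw [if_neg (by omega)]
  rw [h1, h2, List.append_nil]

end St9
namespace St9
open Finset

variable {π : List ℕ}

lemma alpha_length (hπ : IsPartition π) : (alphaOf π).length = Dur π := by
  rw [alphaOf_eq hπ, List.length_map, List.length_range]

lemma alpha_sorted (hπ : IsPartition π) : (alphaOf π).Pairwise (· > ·) := by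
  rw [alphaOf_eq hπ, List.pairwise_iff_getElem]
  intro i j hi hj hij
  simp only [List.length_map, List.length_range] at hi hj
  simp only [List.getElem_map, List.getElem_range]
  have h1 := Dur_lt hj
  have h2 : dfn π j ≤ dfn π i := dfn_anti hπ (le_of_lt hij)
  omega

lemma alpha_pos (hπ : IsPartition π) : ∀ x ∈ alphaOf π, 0 < x := by
  rw [alphaOf_eq hπ]
  intro x hx
  simp only [List.mem_map, List.mem_range] at hx
  obtain ⟨i, hi, rfl⟩ := hx
  have := Dur_lt hi
  omega

lemma alpha_take (hπ : IsPartition π) {t : ℕ} (ht : t ≤ Dur π) :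
    ((alphaOf π).take t).sum = ∑ i ∈ Finset.range t, (dfn π i - i) := by
  rw [alphaOf_eq hπ, ← List.map_take, List.take_range, min_eq_left ht, list_sum_range]

lemma alpha_sum (hπ : IsPartition π) :
    (alphaOf π).sum = ∑ i ∈ Finset.range (Dur π), (dfn π i - i) := by
  rw [alphaOf_eq hπ, list_sum_range]

end St9
namespace St9
open Finset

variable {π : List ℕ}

/-- number of rows with `d i ≥ j` -/
def dstar (π : List ℕ) (j : ℕ) : ℕ :=
  ((Finset.range π.length).filter (fun i => j ≤ dfn π i)).card

lemma betaColCount_eq (π : List ℕ) (j : ℕ) : betaColCount π j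
    = ((Finset.range π.length).filter (fun i => j ≤ i ∧ j ≤ dfn π i)).card := rfl

lemma downset_eq_range {s : Finset ℕ} (H : ∀ a b : ℕ, a ≤ b → b ∈ s → a ∈ s) :
    s = Finset.range s.card := by
  have key : ∀ i, i ∈ s ↔ i < s.card := by
    intro i
    constructor
    · intro hi
      have hsub : Finset.range (i + 1) ⊆ s := by
        intro a ha
        rw [Finset.mem_range] at ha
        exact H a i (by omega) hi
      have := Finset.card_le_card hsub
      rw [Finset.card_range] at this
      omega
    · intro hi
      by_contra hns
      have hsub : s ⊆ Finset.range i := by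
        intro b hb
        rw [Finset.mem_range]
        by_contra hbi
        exact hns (H i b (by omega) hb)
      have := Finset.card_le_card hsub
      rw [Finset.card_range] at this
      omega
  ext i
  rw [key, Finset.mem_range]

lemma filter_dstar (hπ : IsPartition π) {j : ℕ} (hj : 1 ≤ j) :
    (Finset.range π.length).filter (fun i => j ≤ dfn π i) = Finset.range (dstar π j) := by
  apply downset_eq_range
  intro a b hab hb
  simp only [Finset.mem_filter, Finset.mem_range] at hb ⊢
  have h1 : dfn π b ≤ dfn π a := dfn_anti hπ hab
  constructor
  · by_contra h
    have := dfn_zero (show π.length ≤ a by omega)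
    omega
  · omega

lemma betaColCount_dstar (hπ : IsPartition π) {j : ℕ} (hj : 1 ≤ j) :
    betaColCount π j = dstar π j - j := by
  rw [betaColCount_eq]
  have h1 : (Finset.range π.length).filter (fun i => j ≤ i ∧ j ≤ dfn π i)
      = (Finset.range (dstar π j)).filter (fun i => j ≤ i) := by
    rw [← filter_dstar hπ hj, Finset.filter_filter]
    apply Finset.filter_congr
    intro x _
    simp [and_comm]
  rw [h1]
  have h2 : (Finset.range (dstar π j)).filter (fun i => j ≤ i) = Finset.Ico j (dstar π j) := by
    ext x
    simp only [Finset.mem_filter, Finset.mem_range, Finset.mem_Ico]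
    omega
  rw [h2, Nat.card_Ico]

lemma dstar_le_len (j : ℕ) : dstar π j ≤ π.length := by
  have := Finset.card_le_card (Finset.filter_subset (fun i => j ≤ dfn π i) (Finset.range π.length))
  rwa [Finset.card_range] at this

lemma betaColCount_pos_iff (hπ : IsPartition π) {j : ℕ} (hj : 1 ≤ j) :
    0 < betaColCount π j ↔ (j < π.length ∧ j ≤ dfn π j) := by
  rw [betaColCount_dstar hπ hj]
  have h1 : j < dstar π j ↔ j ∈ Finset.range (dstar π j) := by rw [Finset.mem_range]
  rw [Nat.lt_iff_add_one_le] at h1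
  constructor
  · intro h
    have hj2 : j ∈ Finset.range (dstar π j) := by rw [Finset.mem_range]; omega
    rw [← filter_dstar hπ hj] at hj2
    simp only [Finset.mem_filter, Finset.mem_range] at hj2
    exact hj2
  · intro ⟨h2, h3⟩
    have hj2 : j ∈ (Finset.range π.length).filter (fun i => j ≤ dfn π i) := by
      simp only [Finset.mem_filter, Finset.mem_range]; exact ⟨h2, h3⟩
    rw [filter_dstar hπ hj, Finset.mem_range] at hj2
    omega

lemma dstar_anti : Antitone (dstar π) := by
  intro j k hjk
  apply Finset.card_le_card
  intro x hx
  simp only [Finset.mem_filter, Finset.mem_range] at hx ⊢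
  exact ⟨hx.1, le_trans hjk hx.2⟩

lemma dstar_ge_Dur (hπ : IsPartition π) {j : ℕ} (hjD : j ≤ Dur π) :
    Dur π ≤ dstar π j := by
  have hsub : Finset.range (Dur π) ⊆ (Finset.range π.length).filter (fun i => j ≤ dfn π i) := by
    intro i hi
    rw [Finset.mem_range] at hi
    simp only [Finset.mem_filter, Finset.mem_range]
    have h1 := dfn_ge_Dur hπ hi
    have h2 := @Dur_le_len π
    constructor
    · omega
    · omega
  have := Finset.card_le_card hsub
  rwa [Finset.card_range] at this

lemma exDb (π : List ℕ) : ∃ j, betaColCount π (j + 1) = 0 := by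
  refine ⟨π.length, ?_⟩
  rw [betaColCount_eq]
  convert Finset.card_empty
  ext i
  simp only [Finset.mem_filter, Finset.mem_range, Finset.notMem_empty, iff_false]
  omega

/-- length of beta -/
def Db (π : List ℕ) : ℕ := Nat.find (exDb π)

lemma Db_lt (h : j < Db π) : betaColCount π (j + 1) ≠ 0 := by
  unfold Db at h
  exact Nat.find_min (exDb π) h

lemma Db_spec : betaColCount π (Db π + 1) = 0 := by
  unfold Db
  exact Nat.find_spec (exDb π)

lemma Db_le_len : Db π ≤ π.length := by
  unfold Db
  apply Nat.find_le
  rw [betaColCount_eq]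
  convert Finset.card_empty
  ext i
  simp only [Finset.mem_filter, Finset.mem_range, Finset.notMem_empty, iff_false]
  omega

lemma b_anti (hπ : IsPartition π) {j k : ℕ} (hjk : j ≤ k) :
    betaColCount π (k + 1) ≤ betaColCount π (j + 1) := by
  rw [betaColCount_dstar hπ (by omega), betaColCount_dstar hπ (by omega)]
  have := dstar_anti (π := π) (show j + 1 ≤ k + 1 by omega)
  omega

lemma b_zero (hπ : IsPartition π) {j : ℕ} (h : Db π ≤ j) : betaColCount π (j + 1) = 0 := by
  have h1 := b_anti hπ h (π := π)
  have h2 := @Db_spec π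
  omega

lemma betaOf_eq (hπ : IsPartition π) :
    betaOf π = (List.range (Db π)).map (fun j => betaColCount π (j + 1)) := by
  unfold betaOf
  have hlen : π.length = Db π + (π.length - Db π) := by
    have := @Db_le_len π; omega
  rw [hlen, List.range_add, List.map_append, List.filter_append]
  have h1 : ((List.range (Db π)).map (fun j => betaColCount π (j + 1))).filter
      (fun c => c != 0) = (List.range (Db π)).map (fun j => betaColCount π (j + 1)) := by
    rw [List.filter_eq_self]
    intro a ha
    simp only [List.mem_map, List.mem_range] at ha
    obtain ⟨j, hj, rfl⟩ := ha
    have := Db_lt hj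
    simpa using this
  have h2 : (((List.range (π.length - Db π)).map (fun x => Db π + x)).map
      (fun j => betaColCount π (j + 1))).filter (fun c => c != 0) = [] := by
    rw [List.filter_eq_nil_iff]
    intro a ha
    simp only [List.mem_map, List.mem_range] at ha
    obtain ⟨x, ⟨y, hy, rfl⟩, rfl⟩ := ha
    have := b_zero hπ (show Db π ≤ Db π + y by omega)
    simpa using this
  rw [h1, h2, List.append_nil]

lemma beta_length (hπ : IsPartition π) : (betaOf π).length = Db π := by
  rw [betaOf_eq hπ, List.length_map, List.length_range]

lemma beta_pos (hπ : IsPartition π) : ∀ x ∈ betaOf π, 0 < x := by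
  rw [betaOf_eq hπ]
  intro x hx
  simp only [List.mem_map, List.mem_range] at hx
  obtain ⟨j, hj, rfl⟩ := hx
  have := Db_lt hj
  omega

lemma beta_sorted (hπ : IsPartition π) : (betaOf π).Pairwise (· > ·) := by
  rw [betaOf_eq hπ, List.pairwise_iff_getElem]
  intro i j hi hj hij
  simp only [List.length_map, List.length_range] at hi hj
  simp only [List.getElem_map, List.getElem_range]
  have h0 : betaColCount π (j + 1) ≠ 0 := Db_lt hj
  rw [betaColCount_dstar hπ (by omega), betaColCount_dstar hπ (by omega)] at *
  have h1 := dstar_anti (π := π) (show i + 1 ≤ j + 1 by omega)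
  omega

lemma beta_take (hπ : IsPartition π) {t : ℕ} (ht : t ≤ Db π) :
    ((betaOf π).take t).sum = ∑ j ∈ Finset.range t, betaColCount π (j + 1) := by
  rw [betaOf_eq hπ, ← List.map_take, List.take_range, min_eq_left ht, list_sum_range]

lemma beta_sum (hπ : IsPartition π) :
    (betaOf π).sum = ∑ j ∈ Finset.range (Db π), betaColCount π (j + 1) := by
  rw [betaOf_eq hπ, list_sum_range]

lemma Db_le_Dur (hπ : IsPartition π) : Db π ≤ Dur π := by
  unfold Db
  apply Nat.find_le
  by_contra h
  have h1 := (betaColCount_pos_iff hπ (show 1 ≤ Dur π + 1 by omega)).mp (by omega)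
  have h2 : dfn π (Dur π + 1) ≤ dfn π (Dur π) := dfn_anti hπ (by omega)
  have h3 := @Dur_spec π
  omega

lemma Dur_le_Db_succ (hπ : IsPartition π) : Dur π ≤ Db π + 1 := by
  have : Dur π - 1 ≤ Db π := by
    unfold Db
    rw [Nat.le_find_iff]
    intro m hm
    have h1 : m + 1 < Dur π := by omega
    have h2 := Dur_lt h1
    have h3 : m + 1 < π.length := by
      have := @Dur_le_len π; omega
    have := (betaColCount_pos_iff hπ (show 1 ≤ m + 1 by omega)).mpr ⟨h3, by omega⟩
    omega
  omega

end St9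
namespace St9
open Finset

variable {π : List ℕ}

lemma bsum_counting (t : ℕ) :
    ∑ j ∈ Finset.range t, betaColCount π (j + 1)
      = ∑ i ∈ Finset.range π.length, min t (min i (dfn π i)) := by
  have h1 : ∀ j, betaColCount π (j + 1)
      = ∑ i ∈ Finset.range π.length, if j + 1 ≤ i ∧ j + 1 ≤ dfn π i then 1 else 0 := by
    intro j
    rw [betaColCount_eq, Finset.card_filter]
  calc ∑ j ∈ Finset.range t, betaColCount π (j + 1)
      = ∑ j ∈ Finset.range t, ∑ i ∈ Finset.range π.length,
          if j + 1 ≤ i ∧ j + 1 ≤ dfn π i then 1 else 0 := by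
        apply Finset.sum_congr rfl; intro j _; exact h1 j
    _ = ∑ i ∈ Finset.range π.length, ∑ j ∈ Finset.range t,
          if j + 1 ≤ i ∧ j + 1 ≤ dfn π i then 1 else 0 := Finset.sum_comm
    _ = ∑ i ∈ Finset.range π.length, min t (min i (dfn π i)) := by
        apply Finset.sum_congr rfl
        intro i _
        rw [← Finset.card_filter]
        have : (Finset.range t).filter (fun j => j + 1 ≤ i ∧ j + 1 ≤ dfn π i)
            = Finset.range (min t (min i (dfn π i))) := by
          ext x
          simp only [Finset.mem_filter, Finset.mem_range]
          omega
        rw [this, Finset.card_range]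

lemma Bt_split (hπ : IsPartition π) {t : ℕ} (ht : t ≤ Dur π) :
    ∑ j ∈ Finset.range t, betaColCount π (j + 1)
      = (∑ i ∈ Finset.range t, i) + ∑ i ∈ Finset.Ico t π.length, min t (dfn π i) := by
  rw [bsum_counting]
  have htL : t ≤ π.length := le_trans ht Dur_le_len
  rw [Finset.range_eq_Ico, ← Finset.sum_Ico_consecutive _ (Nat.zero_le t) htL]
  congr 1
  · rw [← Finset.range_eq_Ico]
    apply Finset.sum_congr rfl
    intro i hi
    rw [Finset.mem_range] at hi
    have := Dur_lt (lt_of_lt_of_le hi ht)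
    omega
  · apply Finset.sum_congr rfl
    intro i hi
    rw [Finset.mem_Ico] at hi
    omega

lemma At_plus (hπ : IsPartition π) {t : ℕ} (ht : t ≤ Dur π) :
    ∑ i ∈ Finset.range t, (dfn π i - i) + ∑ i ∈ Finset.range t, i
      = ∑ i ∈ Finset.range t, dfn π i := by
  rw [← Finset.sum_add_distrib]
  apply Finset.sum_congr rfl
  intro i hi
  rw [Finset.mem_range] at hi
  have := Dur_lt (lt_of_lt_of_le hi ht)
  omega

/-- `A_t ≤ B_t` iff Erdős–Gallai-type inequality at `t` -/
lemma AB_iff_EG (hπ : IsPartition π) {t : ℕ} (ht : t ≤ Dur π) :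
    (∑ i ∈ Finset.range t, (dfn π i - i) ≤ ∑ j ∈ Finset.range t, betaColCount π (j + 1))
      ↔ (∑ i ∈ Finset.range t, dfn π i
          ≤ 2 * (∑ i ∈ Finset.range t, i) + ∑ i ∈ Finset.Ico t π.length, min t (dfn π i)) := by
  rw [Bt_split hπ ht]
  have h1 := At_plus hπ ht
  omega

lemma alpha_sum_ext (hπ : IsPartition π) :
    (alphaOf π).sum = ∑ i ∈ Finset.range π.length, (dfn π i - i) := by
  rw [alpha_sum hπ]
  apply Finset.sum_subset
  · exact Finset.range_subset_range.mpr Dur_le_len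
  · intro i _ hi
    rw [Finset.mem_range] at hi
    have := dfn_le_of_Dur_le hπ (show Dur π ≤ i by omega)
    omega

lemma beta_sum_ext (hπ : IsPartition π) :
    (betaOf π).sum = ∑ i ∈ Finset.range π.length, min i (dfn π i) := by
  rw [beta_sum hπ]
  have h1 : ∑ j ∈ Finset.range (Db π), betaColCount π (j + 1)
      = ∑ j ∈ Finset.range π.length, betaColCount π (j + 1) := by
    apply Finset.sum_subset
    · exact Finset.range_subset_range.mpr Db_le_len
    · intro j _ hj
      rw [Finset.mem_range] at hj
      exact b_zero hπ (by omega)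
  rw [h1, bsum_counting]
  apply Finset.sum_congr rfl
  intro i hi
  rw [Finset.mem_range] at hi
  omega

lemma sum_alpha_beta (hπ : IsPartition π) :
    (alphaOf π).sum + (betaOf π).sum = ∑ i ∈ Finset.range π.length, dfn π i := by
  rw [alpha_sum_ext hπ, beta_sum_ext hπ, ← Finset.sum_add_distrib]
  apply Finset.sum_congr rfl
  intro i _
  omega

lemma pi_eq_map (π : List ℕ) : π = (List.range π.length).map (fun i => dfn π i) := by
  apply List.ext_getElem
  · simp
  · intro i h1 h2
    simp only [List.getElem_map, List.getElem_range]
    rw [dfn, List.getD_eq_getElem]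

lemma pi_sum (π : List ℕ) : π.sum = ∑ i ∈ Finset.range π.length, dfn π i := by
  conv_lhs => rw [pi_eq_map π]
  rw [list_sum_range]

end St9
namespace St9
open Finset

variable {π : List ℕ}

lemma exists_enum {V : Type} [Fintype V] (G : SimpleGraph V) [DecidableRel G.Adj]
    (hdeg : HasDegSeq G π) :
    ∃ eqv : Fin (π.length) ≃ V, ∀ i : Fin π.length, G.degree (eqv i) = dfn π i.val := by
  classical
  set l : List V := (Finset.univ.toList).mergeSort
    (fun a b => decide (G.degree b ≤ G.degree a)) with hl
  have hperm : l.Perm Finset.univ.toList := List.mergeSort_perm _ _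
  have hnodup : l.Nodup := hperm.nodup_iff.mpr (Finset.nodup_toList _)
  have hmem : ∀ v : V, v ∈ l := fun v => hperm.mem_iff.mpr (Finset.mem_toList.mpr (Finset.mem_univ v))
  have hsorted : l.Pairwise (fun a b => (decide (G.degree b ≤ G.degree a)) = true) := by
    apply List.pairwise_mergeSort
    · intro a b c hab hbc
      simp only [decide_eq_true_eq] at *
      omega
    · intro a b
      simp only [Bool.or_eq_true, decide_eq_true_eq]
      omega
  have hmapsorted : (l.map (fun v => G.degree v)).Pairwise (· ≥ ·) := by
    apply List.Pairwise.map (S := fun (a b : ℕ) => a ≥ b) (fun v => G.degree v) ?_ hsorted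
    intro a b h
    simp only [decide_eq_true_eq] at h
    exact h
  have hmapperm : (l.map (fun v => G.degree v)).Perm π := by
    rw [← Multiset.coe_eq_coe]
    have h1 : ((l.map (fun v => G.degree v) : List ℕ) : Multiset ℕ)
        = (Finset.univ.val.map (fun v => G.degree v)) := by
      have : ((l : List V) : Multiset V) = Finset.univ.val := by
        rw [← Finset.coe_toList]
        exact Multiset.coe_eq_coe.mpr hperm
      rw [← this]
      rfl
    rw [h1, ← hdeg.2]
  have heq : l.map (fun v => G.degree v) = π := List.Perm.eq_of_pairwise' hmapsorted hdeg.1 hmapperm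
  have hlen : l.length = π.length := by rw [← heq, List.length_map]
  refine ⟨(finCongr hlen.symm).trans (hnodup.getEquivOfForallMemList l hmem), ?_⟩
  intro i
  have hil : i.val < l.length := by rw [hlen]; exact i.2
  have h4 : (l.map (fun v => G.degree v))[i.val]'(by simpa using hil)
      = G.degree (l[i.val]'hil) := List.getElem_map _
  have h5 : (l.map (fun v => G.degree v))[i.val]'(by simpa using hil) = π[i.val]'i.2 :=
    List.getElem_of_eq heq _
  have h6 : dfn π i.val = π[i.val]'i.2 := List.getD_eq_getElem _ _ i.2
  have h2 : G.degree (l.get (finCongr hlen.symm i)) = dfn π i.val := by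
    rw [h6, ← h5, h4]
    rfl
  exact h2

end St9
namespace St9
open Finset

variable {V : Type} [Fintype V] (G : SimpleGraph V) [DecidableRel G.Adj]

lemma neighbor_inter_eq_filter [DecidableEq V] (v : V) (B : Finset V) :
    G.neighborFinset v ∩ B = B.filter (fun w => G.Adj v w) := by
  ext w
  simp only [Finset.mem_inter, SimpleGraph.mem_neighborFinset, Finset.mem_filter]
  tauto

lemma sum_inter_comm [DecidableEq V] (A B : Finset V) :
    ∑ v ∈ A, (G.neighborFinset v ∩ B).card = ∑ w ∈ B, (G.neighborFinset w ∩ A).card := by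
  have h : ∀ (C D : Finset V), ∑ v ∈ C, (G.neighborFinset v ∩ D).card
      = ∑ v ∈ C, ∑ w ∈ D, if G.Adj v w then 1 else 0 := by
    intro C D
    apply Finset.sum_congr rfl
    intro v _
    rw [neighbor_inter_eq_filter, Finset.card_filter]
  rw [h, h, Finset.sum_comm]
  apply Finset.sum_congr rfl; intro w _
  apply Finset.sum_congr rfl; intro v _
  congr 1
  simp [G.adj_comm]

lemma EG_graph [DecidableEq V] (T : Finset V) :
    ∑ v ∈ T, G.degree v
      ≤ T.card * (T.card - 1) + ∑ w ∈ Finset.univ \ T, min T.card (G.degree w) := by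
  have hsplit : ∀ v, G.degree v = (G.neighborFinset v ∩ T).card
      + (G.neighborFinset v ∩ (Finset.univ \ T)).card := by
    intro v
    rw [← SimpleGraph.card_neighborFinset_eq_degree]
    rw [show G.neighborFinset v ∩ (Finset.univ \ T) = G.neighborFinset v \ T by
      ext w; simp]
    exact (Finset.card_inter_add_card_sdiff _ _).symm
  have h1 : ∑ v ∈ T, (G.neighborFinset v ∩ T).card ≤ T.card * (T.card - 1) := by
    have hb : ∀ v ∈ T, (G.neighborFinset v ∩ T).card ≤ T.card - 1 := by
      intro v hv
      have : G.neighborFinset v ∩ T ⊆ T.erase v := by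
        intro w hw
        simp only [Finset.mem_inter, SimpleGraph.mem_neighborFinset] at hw
        rw [Finset.mem_erase]
        exact ⟨(G.ne_of_adj hw.1).symm, hw.2⟩
      calc (G.neighborFinset v ∩ T).card ≤ (T.erase v).card := Finset.card_le_card this
        _ = T.card - 1 := Finset.card_erase_of_mem hv
    calc ∑ v ∈ T, (G.neighborFinset v ∩ T).card ≤ ∑ _v ∈ T, (T.card - 1) :=
          Finset.sum_le_sum hb
      _ = T.card * (T.card - 1) := by rw [Finset.sum_const, smul_eq_mul]
  have h2 : ∑ v ∈ T, (G.neighborFinset v ∩ (Finset.univ \ T)).card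
      ≤ ∑ w ∈ Finset.univ \ T, min T.card (G.degree w) := by
    rw [sum_inter_comm]
    apply Finset.sum_le_sum
    intro w hw
    apply le_min
    · exact Finset.card_le_card (by
        intro x hx
        exact (Finset.mem_inter.mp hx).2)
    · rw [← SimpleGraph.card_neighborFinset_eq_degree]
      exact Finset.card_le_card (Finset.inter_subset_left)
  have h3 : ∑ v ∈ T, G.degree v = ∑ v ∈ T, (G.neighborFinset v ∩ T).card
      + ∑ v ∈ T, (G.neighborFinset v ∩ (Finset.univ \ T)).card := by
    rw [← Finset.sum_add_distrib]; exact Finset.sum_congr rfl (fun v _ => hsplit v)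
  omega

lemma split_sum [DecidableEq V] {K S : Finset V} (hKS : IsKS G K S) :
    ∑ v ∈ K, G.degree v
      = K.card * (K.card - 1) + ∑ w ∈ Finset.univ \ K, G.degree w := by
  have hclique : ∀ v ∈ K, G.neighborFinset v ∩ K = K.erase v := by
    intro v hv
    ext w
    simp only [Finset.mem_inter, SimpleGraph.mem_neighborFinset, Finset.mem_erase]
    constructor
    · intro ⟨h1, h2⟩; exact ⟨(G.ne_of_adj h1).symm, h2⟩
    · intro ⟨h1, h2⟩
      exact ⟨hKS.2.2.1 hv h2 (fun h => h1 (h.symm ▸ rfl)), h2⟩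
  have hindep : ∀ w ∈ Finset.univ \ K, G.neighborFinset w ∩ K = G.neighborFinset w := by
    intro w hw
    rw [Finset.mem_sdiff] at hw
    have hwS : w ∈ S := (hKS.1 w).resolve_left hw.2
    apply Finset.inter_eq_left.mpr
    intro u hu
    rw [SimpleGraph.mem_neighborFinset] at hu
    by_contra huK
    have huS : u ∈ S := (hKS.1 u).resolve_left huK
    exact hKS.2.2.2 hwS huS (G.ne_of_adj hu) hu
  have hsplit : ∀ v, G.degree v = (G.neighborFinset v ∩ K).card
      + (G.neighborFinset v ∩ (Finset.univ \ K)).card := by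
    intro v
    rw [← SimpleGraph.card_neighborFinset_eq_degree]
    rw [show G.neighborFinset v ∩ (Finset.univ \ K) = G.neighborFinset v \ K by
      ext w; simp]
    exact (Finset.card_inter_add_card_sdiff _ _).symm
  calc ∑ v ∈ K, G.degree v
      = ∑ v ∈ K, (G.neighborFinset v ∩ K).card
        + ∑ v ∈ K, (G.neighborFinset v ∩ (Finset.univ \ K)).card := by
        rw [← Finset.sum_add_distrib]; exact Finset.sum_congr rfl (fun v _ => hsplit v)
    _ = K.card * (K.card - 1) + ∑ w ∈ Finset.univ \ K, G.degree w := by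
        congr 1
        · rw [Finset.sum_congr rfl (fun v hv => congrArg Finset.card (hclique v hv))]
          rw [Finset.sum_congr rfl (fun v hv => Finset.card_erase_of_mem hv)]
          rw [Finset.sum_const, smul_eq_mul]
        · rw [sum_inter_comm]
          apply Finset.sum_congr rfl
          intro w hw
          rw [hindep w hw, SimpleGraph.card_neighborFinset_eq_degree]

end St9
namespace St9
open Finset

variable {π : List ℕ}

lemma glue_range (f : ℕ → ℕ) {t L : ℕ} (ht : t ≤ L) :
    ∑ i ∈ Finset.range t, f i = ∑ i : Fin L, if i.val < t then f i.val else 0 := by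
  rw [Fin.sum_univ_eq_sum_range (fun n => if n < t then f n else 0) L]
  rw [← Finset.sum_filter]
  apply Finset.sum_congr
  · ext x
    simp only [Finset.mem_filter, Finset.mem_range]
    omega
  · intros; rfl

lemma glue_Ico (f : ℕ → ℕ) {t L : ℕ} :
    ∑ i ∈ Finset.Ico t L, f i = ∑ i : Fin L, if ¬ i.val < t then f i.val else 0 := by
  rw [Fin.sum_univ_eq_sum_range (fun n => if ¬ n < t then f n else 0) L]
  rw [← Finset.sum_filter]
  apply Finset.sum_congr
  · ext x
    simp only [Finset.mem_filter, Finset.mem_range, Finset.mem_Ico]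
    omega
  · intros; rfl

lemma glue_filter {V : Type} [Fintype V] {L : ℕ} (eqv : Fin L ≃ V) (g : V → ℕ)
    (p : ℕ → Prop) [DecidablePred p] :
    ∑ v ∈ Finset.univ.filter (fun v => p (eqv.symm v).val), g v
      = ∑ i : Fin L, if p i.val then g (eqv i) else 0 := by
  rw [Finset.sum_filter]
  rw [← Equiv.sum_comp eqv (fun v => if p (eqv.symm v).val then g v else 0)]
  apply Finset.sum_congr rfl
  intro i _
  rw [Equiv.symm_apply_apply]

lemma orderEmb_le {k : ℕ} (σ : Fin k ↪o ℕ) : ∀ j : Fin k, (j : ℕ) ≤ σ j := by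
  have H : ∀ m, ∀ h : m < k, m ≤ σ ⟨m, h⟩ := by
    intro m
    induction m with
    | zero => intro h; exact Nat.zero_le _
    | succ m ih =>
        intro h
        have h1 : σ ⟨m, by omega⟩ < σ ⟨m + 1, h⟩ := by
          apply σ.strictMono
          simp [Fin.lt_def]
        have := ih (by omega)
        omega
  intro j
  have := H j.val j.2
  simpa using this

lemma sum_le_sorted (hπ : IsPartition π) (I : Finset ℕ) :
    ∑ i ∈ I, dfn π i ≤ ∑ i ∈ Finset.range I.card, dfn π i := by
  set σ := I.orderEmbOfFin (rfl : I.card = I.card) with hσ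
  have himg : Finset.image (fun j : Fin I.card => σ j) Finset.univ = I := by
    ext x
    simp only [Finset.mem_image, Finset.mem_univ, true_and]
    constructor
    · intro ⟨j, hj⟩
      rw [← hj]
      exact Finset.orderEmbOfFin_mem I rfl j
    · intro hx
      have : x ∈ Set.range σ := by
        rw [Finset.range_orderEmbOfFin]
        exact hx
      obtain ⟨j, hj⟩ := this
      exact ⟨j, hj⟩
  calc ∑ i ∈ I, dfn π i = ∑ j : Fin I.card, dfn π (σ j) := by
        have h := Finset.sum_image (f := dfn π) (s := (Finset.univ : Finset (Fin I.card)))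
          (g := fun j : Fin I.card => σ j)
          (fun x _ y _ hxy => σ.injective hxy)
        rw [himg] at h
        exact h
    _ ≤ ∑ j : Fin I.card, dfn π (j : ℕ) := by
        apply Finset.sum_le_sum
        intro j _
        exact dfn_anti hπ (orderEmb_le σ j)
    _ = ∑ i ∈ Finset.range I.card, dfn π i :=
        Fin.sum_univ_eq_sum_range (fun n => dfn π n) I.card

end St9
namespace St9
open Finset

variable {π : List ℕ}

def gZ (π : List ℕ) (t : ℕ) : ℤ :=
  ∑ i ∈ Finset.range t, (dfn π i : ℤ) - 2 * (∑ i ∈ Finset.range t, (i : ℤ))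
    - ∑ i ∈ Finset.Ico t π.length, (dfn π i : ℤ)

lemma gZ_succ {t : ℕ} (ht : t < π.length) :
    gZ π (t + 1) = gZ π t + 2 * ((dfn π t : ℤ) - t) := by
  unfold gZ
  rw [Finset.sum_range_succ, Finset.sum_range_succ (fun i => (i:ℤ))]
  rw [Finset.sum_eq_sum_Ico_succ_bot ht (fun i => (dfn π i : ℤ))]
  ring

lemma chain_mono (f : ℕ → ℤ) {a b : ℕ} (hab : a ≤ b)
    (H : ∀ i, a ≤ i → i < b → f i ≤ f (i + 1)) : f a ≤ f b := by
  have key : ∀ m, a + m ≤ b → f a ≤ f (a + m) := by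
    intro m
    induction m with
    | zero => intro _; simp
    | succ m ih =>
        intro h
        calc f a ≤ f (a + m) := ih (by omega)
          _ ≤ f (a + m + 1) := H (a + m) (by omega) (by omega)
  have := key (b - a) (by omega)
  rwa [show a + (b - a) = b by omega] at this

lemma gZ_le_Dur (hπ : IsPartition π) {k : ℕ} (hk : k ≤ π.length) :
    gZ π k ≤ gZ π (Dur π) := by
  rcases le_or_gt k (Dur π) with h | h
  · apply chain_mono _ h
    intro i hik hiD
    rw [gZ_succ (lt_of_lt_of_le hiD Dur_le_len)]
    have := Dur_lt hiD
    omega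
  · have hd := @Dur_le_len π
    have := chain_mono (fun i => - gZ π i) (le_of_lt h) ?_
    · have h2 : - gZ π (Dur π) ≤ - gZ π k := this
      omega
    · intro i hiD hik
      show - gZ π i ≤ - gZ π (i + 1)
      rw [gZ_succ (lt_of_lt_of_le hik hk)]
      have := dfn_le_of_Dur_le hπ hiD
      omega

lemma gZ_Dur_eq (hπ : IsPartition π) :
    gZ π (Dur π) = ((alphaOf π).sum : ℤ) - ((betaOf π).sum : ℤ) := by
  have h1 : (alphaOf π).sum + ∑ i ∈ Finset.range (Dur π), i
      = ∑ i ∈ Finset.range (Dur π), dfn π i := by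
    rw [alpha_sum hπ]; exact At_plus hπ le_rfl
  have h2 := sum_alpha_beta hπ
  have h3 : ∑ i ∈ Finset.range (Dur π), dfn π i + ∑ i ∈ Finset.Ico (Dur π) π.length, dfn π i
      = ∑ i ∈ Finset.range π.length, dfn π i := by
    simp only [Finset.range_eq_Ico]
    exact Finset.sum_Ico_consecutive _ (Nat.zero_le _) Dur_le_len
  have h4 : gZ π (Dur π) = ((∑ i ∈ Finset.range (Dur π), dfn π i : ℕ) : ℤ)
      - 2 * ((∑ i ∈ Finset.range (Dur π), i : ℕ) : ℤ)
      - ((∑ i ∈ Finset.Ico (Dur π) π.length, dfn π i : ℕ) : ℤ) := by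
    unfold gZ
    push_cast
    ring
  omega

lemma forward (hπ : IsPartition π) {V : Type} [Fintype V] (G : SimpleGraph V)
    [DecidableRel G.Adj] (hsplit : IsSplit G) (hdeg : HasDegSeq G π) :
    Majorizes (betaOf π) (alphaOf π) := by
  classical
  obtain ⟨eqv, heqv⟩ := exists_enum G hdeg
  -- Erdős–Gallai inequalities from the graph
  have hEG : ∀ t, t ≤ π.length → ∑ i ∈ Finset.range t, dfn π i
      ≤ t * (t - 1) + ∑ i ∈ Finset.Ico t π.length, min t (dfn π i) := by
    intro t ht
    set T : Finset V := Finset.univ.filter (fun v => (eqv.symm v).val < t) with hT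
    have hT1 : ∑ v ∈ T, G.degree v = ∑ i ∈ Finset.range t, dfn π i := by
      rw [hT, glue_filter eqv (fun v => G.degree v) (fun n => n < t)]
      rw [glue_range (fun n => dfn π n) ht]
      apply Finset.sum_congr rfl
      intro i _
      by_cases h : i.val < t <;> simp [h, heqv i]
    have hT2 : T.card = t := by
      rw [Finset.card_eq_sum_ones, hT,
        glue_filter eqv (fun _ => 1) (fun n => n < t)]
      rw [← glue_range (fun _ => 1) ht]
      simp
    have hT3 : Finset.univ \ T = Finset.univ.filter (fun v => ¬ (eqv.symm v).val < t) := by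
      rw [hT]; ext v; simp
    have hT4 : ∑ w ∈ Finset.univ \ T, min T.card (G.degree w)
        = ∑ i ∈ Finset.Ico t π.length, min t (dfn π i) := by
      rw [hT3, hT2, glue_filter eqv (fun v => min t (G.degree v)) (fun n => ¬ n < t)]
      rw [glue_Ico (fun n => min t (dfn π n)) (t := t) (L := π.length)]
      apply Finset.sum_congr rfl
      intro i _
      by_cases h : i.val < t <;> simp [h, heqv i]
    have := EG_graph G T
    rw [hT1, hT4, hT2] at this
    exact this
  -- partial-sum dominance
  have hAB : ∀ t, t ≤ Dur π → ∑ i ∈ Finset.range t, (dfn π i - i)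
      ≤ ∑ j ∈ Finset.range t, betaColCount π (j + 1) := by
    intro t ht
    rw [AB_iff_EG hπ ht]
    have h1 := hEG t (le_trans ht Dur_le_len)
    have h2 := Finset.sum_range_id_mul_two t
    omega
  -- sums are equal
  have hBDur : ∑ j ∈ Finset.range (Dur π), betaColCount π (j + 1) = (betaOf π).sum := by
    rw [beta_sum hπ]
    symm
    apply Finset.sum_subset
    · exact Finset.range_subset_range.mpr (Db_le_Dur hπ)
    · intro j _ hj
      rw [Finset.mem_range] at hj
      exact b_zero hπ (by omega)
  have hAleB : (alphaOf π).sum ≤ (betaOf π).sum := by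
    have := hAB (Dur π) le_rfl
    rw [hBDur] at this
    rw [alpha_sum hπ]
    exact this
  -- clique inequality
  obtain ⟨K, S, hKS⟩ := hsplit
  have hBleA : (betaOf π).sum ≤ (alphaOf π).sum := by
    set I : Finset ℕ := K.image (fun v => (eqv.symm v).val) with hI
    have hinj : Function.Injective (fun v : V => (eqv.symm v).val) := by
      intro a b h
      have : eqv.symm a = eqv.symm b := Fin.val_injective h
      exact eqv.symm.injective this
    have hI1 : I.card = K.card := Finset.card_image_of_injective K hinj
    have hI2 : ∑ i ∈ I, dfn π i = ∑ v ∈ K, G.degree v := by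
      rw [hI, Finset.sum_image (fun x _ y _ h => hinj h)]
      apply Finset.sum_congr rfl
      intro v _
      have := heqv (eqv.symm v)
      rw [Equiv.apply_symm_apply] at this
      exact this.symm
    have hI3 : I ⊆ Finset.range π.length := by
      intro i hi
      rw [hI, Finset.mem_image] at hi
      obtain ⟨v, _, rfl⟩ := hi
      rw [Finset.mem_range]
      exact (eqv.symm v).2
    have htotV : ∑ v ∈ Finset.univ, G.degree v = ∑ i ∈ Finset.range π.length, dfn π i := by
      rw [← Equiv.sum_comp eqv (fun v => G.degree v)]
      rw [← Fin.sum_univ_eq_sum_range (fun n => dfn π n) π.length]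
      apply Finset.sum_congr rfl
      intro i _
      exact heqv i
    have hsd1 : ∑ i ∈ Finset.range π.length \ I, dfn π i + ∑ i ∈ I, dfn π i
        = ∑ i ∈ Finset.range π.length, dfn π i := Finset.sum_sdiff hI3
    have hsd2 : ∑ v ∈ Finset.univ \ K, G.degree v + ∑ v ∈ K, G.degree v
        = ∑ v ∈ Finset.univ, G.degree v := Finset.sum_sdiff (Finset.subset_univ K)
    have hss := split_sum G hKS
    have htop := sum_le_sorted hπ I
    rw [hI1] at htop
    have hkL : K.card ≤ π.length := by
      have := Finset.card_le_card hI3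
      rw [Finset.card_range, hI1] at this
      exact this
    -- g(k) ≥ 0
    have hgk : 0 ≤ gZ π K.card := by
      have h4 : gZ π K.card = ((∑ i ∈ Finset.range K.card, dfn π i : ℕ) : ℤ)
          - 2 * ((∑ i ∈ Finset.range K.card, i : ℕ) : ℤ)
          - ((∑ i ∈ Finset.Ico K.card π.length, dfn π i : ℕ) : ℤ) := by
        unfold gZ
        push_cast
        ring
      have h5 : ∑ i ∈ Finset.range K.card, dfn π i + ∑ i ∈ Finset.Ico K.card π.length, dfn π i
          = ∑ i ∈ Finset.range π.length, dfn π i := by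
        simp only [Finset.range_eq_Ico]
        exact Finset.sum_Ico_consecutive _ (Nat.zero_le _) hkL
      have h6 := Finset.sum_range_id_mul_two K.card
      omega
    have := le_trans hgk (gZ_le_Dur hπ hkL)
    rw [gZ_Dur_eq hπ] at this
    omega
  have hsum : (betaOf π).sum = (alphaOf π).sum := le_antisymm hBleA hAleB
  refine ⟨hsum, ?_⟩
  intro k hk
  rw [alpha_length hπ, beta_length hπ, min_eq_right (Db_le_Dur hπ)] at hk
  rw [alpha_take hπ (le_trans hk (Db_le_Dur hπ)), beta_take hπ hk]
  exact hAB k (le_trans hk (Db_le_Dur hπ))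

end St9
namespace St9
open Finset

/-- row sum of a 0-1 matrix -/
def rsum (s : ℕ) (M : ℕ → ℕ → Bool) (i : ℕ) : ℕ :=
  ∑ j ∈ Finset.range s, (if M i j then 1 else 0)

/-- column sum of a 0-1 matrix -/
def csum (D : ℕ) (M : ℕ → ℕ → Bool) (j : ℕ) : ℕ :=
  ∑ i ∈ Finset.range D, (if M i j then 1 else 0)

lemma rows_eq_cols (D s : ℕ) (M : ℕ → ℕ → Bool) :
    ∑ i ∈ Finset.range D, rsum s M i = ∑ j ∈ Finset.range s, csum D M j := by
  unfold rsum csum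
  exact Finset.sum_comm

lemma GR_rec (D s : ℕ) (e c : ℕ → ℕ) (he : Antitone e)
    (hsum : ∑ i ∈ Finset.range D, e i = ∑ j ∈ Finset.range s, c j) :
    ∀ N : ℕ, ∀ M : ℕ → ℕ → Bool,
      (∀ j < s, csum D M j = c j) →
      (∀ t, t ≤ D → ∑ i ∈ Finset.range t, e i ≤ ∑ i ∈ Finset.range t, rsum s M i) →
      (∑ t ∈ Finset.range (D + 1),
        (∑ i ∈ Finset.range t, rsum s M i - ∑ i ∈ Finset.range t, e i)) ≤ N →
      ∃ M' : ℕ → ℕ → Bool, (∀ i < D, rsum s M' i = e i) ∧ (∀ j < s, csum D M' j = c j) := by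
  intro N
  induction N with
  | zero =>
      intro M hcols hinv hphi
      -- Φ = 0 forces equality of all partial sums, hence of rows
      by_cases hdone : ∀ i < D, rsum s M i = e i
      · exact ⟨M, hdone, hcols⟩
      · exfalso
        push_neg at hdone
        obtain ⟨i0, hi0D, hi0⟩ := hdone
        -- partial sums all equal
        have hpeq : ∀ t, t ≤ D →
            ∑ i ∈ Finset.range t, rsum s M i = ∑ i ∈ Finset.range t, e i := by
          intro t ht
          have h1 : (∑ i ∈ Finset.range t, rsum s M i - ∑ i ∈ Finset.range t, e i) = 0 := by
            have := Finset.sum_eq_zero_iff.mp (Nat.le_zero.mp hphi)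
            exact this t (Finset.mem_range.mpr (by omega))
          have h2 := hinv t ht
          omega
        have h3 := hpeq i0 (by omega)
        have h4 := hpeq (i0 + 1) (by omega)
        rw [Finset.sum_range_succ, Finset.sum_range_succ (fun i => e i)] at h4
        omega
  | succ N ih =>
      intro M hcols hinv hphi
      by_cases hdone : ∀ i < D, rsum s M i = e i
      · exact ⟨M, hdone, hcols⟩
      push_neg at hdone
      have htotal : ∑ i ∈ Finset.range D, rsum s M i = ∑ i ∈ Finset.range D, e i := by
        rw [rows_eq_cols, hsum]
        apply Finset.sum_congr rfl
        intro j hj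
        exact hcols j (Finset.mem_range.mp hj)
      -- least row where they differ
      have ex1 : ∃ n, n < D ∧ rsum s M n ≠ e n := hdone
      obtain ⟨t0, ⟨ht0D, ht0ne⟩, ht0min'⟩ :
          ∃ n, (n < D ∧ rsum s M n ≠ e n) ∧ ∀ i < n, ¬(i < D ∧ rsum s M i ≠ e i) :=
        ⟨Nat.find ex1, Nat.find_spec ex1, fun i hi => Nat.find_min ex1 hi⟩
      have ht0min : ∀ i, i < t0 → rsum s M i = e i := by
        intro i hi
        have := ht0min' i hi
        by_cases hiD : i < D
        · tauto
        · omega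
      have hpeq0 : ∑ i ∈ Finset.range t0, rsum s M i = ∑ i ∈ Finset.range t0, e i :=
        Finset.sum_congr rfl (fun i hi => ht0min i (Finset.mem_range.mp hi))
      have ht0gt : e t0 < rsum s M t0 := by
        have h1 := hinv (t0 + 1) (by omega)
        have h2 : ∑ i ∈ Finset.range (t0+1), e i = ∑ i ∈ Finset.range t0, e i + e t0 :=
          Finset.sum_range_succ e t0
        have h3 : ∑ i ∈ Finset.range (t0+1), rsum s M i
            = ∑ i ∈ Finset.range t0, rsum s M i + rsum s M t0 :=
          Finset.sum_range_succ (rsum s M) t0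
        omega
      -- a row with deficit
      have ex2 : ∃ n, n < D ∧ rsum s M n < e n := by
        by_contra hno
        push_neg at hno
        have hlt : ∑ i ∈ Finset.range D, e i < ∑ i ∈ Finset.range D, rsum s M i := by
          apply Finset.sum_lt_sum
          · intro i hi; exact hno i (Finset.mem_range.mp hi)
          · exact ⟨t0, Finset.mem_range.mpr ht0D, ht0gt⟩
        omega
      obtain ⟨w, ⟨hwD, hwlt⟩, hwmin'⟩ :
          ∃ n, (n < D ∧ rsum s M n < e n) ∧ ∀ i < n, ¬(i < D ∧ rsum s M i < e i) :=
        ⟨Nat.find ex2, Nat.find_spec ex2, fun i hi => Nat.find_min ex2 hi⟩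
      have hwmin : ∀ i, i < w → i < D → e i ≤ rsum s M i := by
        intro i hi hiD
        have := hwmin' i hi
        push_neg at this
        exact this hiD
      have ht0w : t0 < w := by
        rcases lt_trichotomy t0 w with h | h | h
        · exact h
        · exfalso; rw [h] at ht0gt; omega
        · have := ht0min w h; omega
      have hew : e w ≤ e t0 := he (le_of_lt ht0w)
      have hrr : rsum s M w < rsum s M t0 := by omega
      -- pigeonhole column
      have exj : ∃ j, j < s ∧ M t0 j = true ∧ M w j = false := by
        by_contra hno
        push_neg at hno
        have hle : rsum s M t0 ≤ rsum s M w := by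
          apply Finset.sum_le_sum
          intro j hj
          have := hno j (Finset.mem_range.mp hj)
          cases h1 : M t0 j <;> cases h2 : M w j <;> simp_all
        omega
      obtain ⟨j0, hj0s, hMt0, hMw⟩ := exj
      -- the swapped matrix
      set M' : ℕ → ℕ → Bool := fun i j =>
        if i = t0 ∧ j = j0 then false else if i = w ∧ j = j0 then true else M i j with hM'def
      have hM'off : ∀ i j, j ≠ j0 → M' i j = M i j := by
        intro i j hj
        simp only [hM'def]
        rw [if_neg (by tauto), if_neg (by tauto)]
      have hM't0 : M' t0 j0 = false := by
        simp [hM'def]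
      have hM'w : M' w j0 = true := by
        simp [hM'def, show ¬ w = t0 by omega]
      have hM'other : ∀ i, i ≠ t0 → i ≠ w → M' i j0 = M i j0 := by
        intro i h1 h2
        simp only [hM'def]
        rw [if_neg (by tauto), if_neg (by tauto)]
      -- row sums change
      have hr' : ∀ i, rsum s M' i + (if i = t0 then 1 else 0)
          = rsum s M i + (if i = w then 1 else 0) := by
        intro i
        unfold rsum
        rw [Finset.sum_eq_sum_sdiff_singleton_add (Finset.mem_range.mpr hj0s)
          (fun j => if M' i j then 1 else 0),
          Finset.sum_eq_sum_sdiff_singleton_add (Finset.mem_range.mpr hj0s)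
          (fun j => if M i j then 1 else 0)]
        have hoff : ∑ j ∈ Finset.range s \ {j0}, (if M' i j then 1 else 0)
            = ∑ j ∈ Finset.range s \ {j0}, (if M i j then 1 else 0) := by
          apply Finset.sum_congr rfl
          intro j hj
          rw [Finset.mem_sdiff, Finset.mem_singleton] at hj
          rw [hM'off i j hj.2]
        rw [hoff]
        by_cases h1 : i = t0
        · rw [show M' i j0 = false by rw [h1]; exact hM't0,
            show M i j0 = true by rw [h1]; exact hMt0,
            if_pos h1, if_neg (show ¬ i = w by omega)]
          simp
        · by_cases h2 : i = w
          · rw [show M' i j0 = true by rw [h2]; exact hM'w,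
              show M i j0 = false by rw [h2]; exact hMw,
              if_pos h2, if_neg h1]
            simp
          · rw [hM'other i h1 h2, if_neg h1, if_neg h2]
      -- partial row sums
      have hps : ∀ t, ∑ i ∈ Finset.range t, rsum s M' i + (if t0 < t then 1 else 0)
          = ∑ i ∈ Finset.range t, rsum s M i + (if w < t then 1 else 0) := by
        intro t
        have h1 : ∑ i ∈ Finset.range t, (rsum s M' i + (if i = t0 then 1 else 0))
            = ∑ i ∈ Finset.range t, (rsum s M i + (if i = w then 1 else 0)) :=
          Finset.sum_congr rfl (fun i _ => hr' i)
        rw [Finset.sum_add_distrib, Finset.sum_add_distrib] at h1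
        rw [Finset.sum_ite_eq' (Finset.range t) t0 (fun _ => 1),
          Finset.sum_ite_eq' (Finset.range t) w (fun _ => 1)] at h1
        simp only [Finset.mem_range] at h1
        exact h1
      -- column sums unchanged
      have hc' : ∀ j < s, csum D M' j = c j := by
        intro j hjs
        by_cases hj : j = j0
        · subst hj
          rw [← hcols j hjs]
          unfold csum
          have h1 : ∀ i, (if M' i j then 1 else 0) + (if i = t0 then 1 else 0)
              = (if M i j then 1 else 0) + (if i = w then 1 else 0) := by
            intro i
            by_cases h1 : i = t0
            · rw [show M' i j = false by rw [h1]; exact hM't0,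
                show M i j = true by rw [h1]; exact hMt0,
                if_pos h1, if_neg (show ¬ i = w by omega)]
              simp
            · by_cases h2 : i = w
              · rw [show M' i j = true by rw [h2]; exact hM'w,
                  show M i j = false by rw [h2]; exact hMw,
                  if_pos h2, if_neg h1]
                simp
              · rw [hM'other i h1 h2, if_neg h1, if_neg h2]
          have h2 : ∑ i ∈ Finset.range D, ((if M' i j then 1 else 0) + (if i = t0 then 1 else 0))
              = ∑ i ∈ Finset.range D, ((if M i j then 1 else 0) + (if i = w then 1 else 0)) :=
            Finset.sum_congr rfl (fun i _ => h1 i)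
          rw [Finset.sum_add_distrib, Finset.sum_add_distrib] at h2
          rw [Finset.sum_ite_eq' (Finset.range D) t0 (fun _ => 1),
            Finset.sum_ite_eq' (Finset.range D) w (fun _ => 1)] at h2
          rw [if_pos (Finset.mem_range.mpr ht0D), if_pos (Finset.mem_range.mpr hwD)] at h2
          omega
        · rw [← hcols j hjs]
          unfold csum
          exact Finset.sum_congr rfl (fun i _ => by rw [hM'off i j hj])
      -- strict inequality in the middle
      have hstrict : ∀ t, t0 < t → t ≤ w →
          ∑ i ∈ Finset.range t, e i + 1 ≤ ∑ i ∈ Finset.range t, rsum s M i := by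
        intro t h1 h2
        have hsplit : ∀ f : ℕ → ℕ, ∑ i ∈ Finset.range t, f i
            = ∑ i ∈ Finset.range t0, f i + f t0 + ∑ i ∈ Finset.Ico (t0+1) t, f i := by
          intro f
          rw [Finset.range_eq_Ico, ← Finset.sum_Ico_consecutive f (Nat.zero_le (t0+1)) (by omega)]
          rw [← Finset.range_eq_Ico]  -- no-op attempt
          rw [Finset.sum_range_succ]
        rw [hsplit (fun i => e i), hsplit (fun i => rsum s M i)]
        have h3 : ∑ i ∈ Finset.Ico (t0+1) t, e i ≤ ∑ i ∈ Finset.Ico (t0+1) t, rsum s M i := by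
          apply Finset.sum_le_sum
          intro i hi
          rw [Finset.mem_Ico] at hi
          exact hwmin i (by omega) (by omega)
        omega
      -- new invariant
      have hinv' : ∀ t, t ≤ D → ∑ i ∈ Finset.range t, e i
          ≤ ∑ i ∈ Finset.range t, rsum s M' i := by
        intro t htD
        have h1 := hps t
        have h2 := hinv t htD
        by_cases ha : t0 < t
        · by_cases hb : w < t
          · rw [if_pos ha, if_pos hb] at h1; omega
          · rw [if_pos ha, if_neg hb] at h1
            have h3 := hstrict t ha (by omega)
            omega
        · rw [if_neg ha, if_neg (by omega)] at h1; omega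
      -- potential decreases
      have hphi' : ∑ t ∈ Finset.range (D + 1),
          (∑ i ∈ Finset.range t, rsum s M' i - ∑ i ∈ Finset.range t, e i) ≤ N := by
        have hterm : ∀ t ∈ Finset.range (D + 1),
            (∑ i ∈ Finset.range t, rsum s M' i - ∑ i ∈ Finset.range t, e i)
            ≤ (∑ i ∈ Finset.range t, rsum s M i - ∑ i ∈ Finset.range t, e i) := by
          intro t _
          have h1 := hps t
          by_cases ha : t0 < t
          · by_cases hb : w < t
            · rw [if_pos ha, if_pos hb] at h1; omega
            · rw [if_pos ha, if_neg hb] at h1; omega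
          · rw [if_neg ha, if_neg (by omega)] at h1; omega
        have hstr : (∑ i ∈ Finset.range (t0+1), rsum s M' i
              - ∑ i ∈ Finset.range (t0+1), e i)
            < (∑ i ∈ Finset.range (t0+1), rsum s M i - ∑ i ∈ Finset.range (t0+1), e i) := by
          have h1 := hps (t0 + 1)
          rw [if_pos (by omega), if_neg (by omega)] at h1
          have h2 := hstrict (t0 + 1) (by omega) (by omega)
          omega
        have := Finset.sum_lt_sum hterm ⟨t0 + 1, Finset.mem_range.mpr (by omega), hstr⟩
        omega
      exact ih M' hc' hinv' hphi'

lemma GR_exists (D s : ℕ) (e c : ℕ → ℕ) (he : Antitone e)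
    (hcs : ∀ j < s, c j ≤ D)
    (hGR : ∀ t, t ≤ D → ∑ i ∈ Finset.range t, e i ≤ ∑ j ∈ Finset.range s, min t (c j))
    (hsum : ∑ i ∈ Finset.range D, e i = ∑ j ∈ Finset.range s, c j) :
    ∃ M : ℕ → ℕ → Bool, (∀ i < D, rsum s M i = e i) ∧ (∀ j < s, csum D M j = c j) := by
  set M0 : ℕ → ℕ → Bool := fun i j => decide (i < c j) with hM0
  have hcols : ∀ j < s, csum D M0 j = c j := by
    intro j hj
    unfold csum
    have h1 : ∀ i, (if M0 i j then 1 else 0) = if i < c j then 1 else 0 := by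
      intro i; simp [hM0]
    rw [Finset.sum_congr rfl (fun i _ => h1 i), ← Finset.card_filter]
    have : (Finset.range D).filter (fun i => i < c j) = Finset.range (c j) := by
      ext x
      simp only [Finset.mem_filter, Finset.mem_range]
      have := hcs j hj
      omega
    rw [this, Finset.card_range]
  have hinv : ∀ t, t ≤ D → ∑ i ∈ Finset.range t, e i
      ≤ ∑ i ∈ Finset.range t, rsum s M0 i := by
    intro t ht
    have h1 : ∑ i ∈ Finset.range t, rsum s M0 i = ∑ j ∈ Finset.range s, min t (c j) := by
      unfold rsum
      rw [Finset.sum_comm]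
      apply Finset.sum_congr rfl
      intro j _
      have h2 : ∀ i, (if M0 i j then 1 else 0) = if i < c j then 1 else 0 := by
        intro i; simp [hM0]
      rw [Finset.sum_congr rfl (fun i _ => h2 i), ← Finset.card_filter]
      have : (Finset.range t).filter (fun i => i < c j) = Finset.range (min t (c j)) := by
        ext x
        simp only [Finset.mem_filter, Finset.mem_range]
        omega
      rw [this, Finset.card_range]
    rw [h1]
    exact hGR t ht
  exact GR_rec D s e c he hsum _ M0 hcols hinv le_rfl

end St9
namespace St9
open Finset

/-- the split relation on `ℕ` indices -/
def sbase (D : ℕ) (M : ℕ → ℕ → Bool) (a b : ℕ) : Prop :=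
  (a < D ∧ b < D) ∨ (a < D ∧ D ≤ b ∧ M a (b - D) = true)

instance sbase_dec (D : ℕ) (M : ℕ → ℕ → Bool) (a b : ℕ) : Decidable (sbase D M a b) := by
  unfold sbase; infer_instance

/-- the split graph associated to a bipartite matrix -/
def sgraph (L D : ℕ) (M : ℕ → ℕ → Bool) : SimpleGraph (Fin L) :=
  SimpleGraph.fromRel (fun u v => sbase D M u.val v.val)

instance sgraph_dec (L D : ℕ) (M : ℕ → ℕ → Bool) : DecidableRel (sgraph L D M).Adj :=
  fun u v => decidable_of_iff _ (SimpleGraph.fromRel_adj _ u v).symm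

lemma sgraph_adj {L D : ℕ} {M : ℕ → ℕ → Bool} (u v : Fin L) :
    (sgraph L D M).Adj u v
      ↔ u.val ≠ v.val ∧ (sbase D M u.val v.val ∨ sbase D M v.val u.val) := by
  rw [sgraph, SimpleGraph.fromRel_adj, Fin.val_ne_iff]

lemma sgraph_degree {π : List ℕ} (hπ : IsPartition π) (M : ℕ → ℕ → Bool)
    (hrow : ∀ i < Dur π, rsum (π.length - Dur π) M i = dfn π i - (Dur π - 1))
    (hcol : ∀ j < π.length - Dur π, csum (Dur π) M j = dfn π (Dur π + j))
    (v : Fin π.length) :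
    (sgraph π.length (Dur π) M).degree v = dfn π v.val := by
  have hDL : Dur π ≤ π.length := Dur_le_len
  have hdeg1 : (sgraph π.length (Dur π) M).degree v
      = ∑ w : Fin π.length,
        (if v.val ≠ w.val ∧ (sbase (Dur π) M v.val w.val ∨ sbase (Dur π) M w.val v.val)
          then 1 else 0) := by
    rw [← SimpleGraph.card_neighborFinset_eq_degree, SimpleGraph.neighborFinset_eq_filter,
      Finset.card_filter]
    apply Finset.sum_congr rfl
    intro w _
    exact if_congr (sgraph_adj v w) rfl rfl
  have hdeg2 : (sgraph π.length (Dur π) M).degree v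
      = ∑ b ∈ Finset.range π.length,
        (if v.val ≠ b ∧ (sbase (Dur π) M v.val b ∨ sbase (Dur π) M b v.val)
          then 1 else 0) := by
    rw [hdeg1]
    exact Fin.sum_univ_eq_sum_range
      (fun b => if v.val ≠ b ∧ (sbase (Dur π) M v.val b ∨ sbase (Dur π) M b v.val)
        then 1 else 0) π.length
  have hsplitsum : ∀ f : ℕ → ℕ, ∑ b ∈ Finset.range π.length, f b
      = ∑ b ∈ Finset.range (Dur π), f b + ∑ b ∈ Finset.Ico (Dur π) π.length, f b := by
    intro f
    simp only [Finset.range_eq_Ico]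
    exact (Finset.sum_Ico_consecutive f (Nat.zero_le _) hDL).symm
  set a := v.val with ha
  have haL : a < π.length := v.2
  rw [hdeg2, hsplitsum]
  by_cases haD : a < Dur π
  · -- clique vertex
    have h1 : ∑ b ∈ Finset.range (Dur π),
        (if a ≠ b ∧ (sbase (Dur π) M a b ∨ sbase (Dur π) M b a) then 1 else 0)
        = Dur π - 1 := by
      have hc : ∀ b ∈ Finset.range (Dur π),
          (if a ≠ b ∧ (sbase (Dur π) M a b ∨ sbase (Dur π) M b a) then 1 else 0)
          = if b ≠ a then 1 else 0 := by
        intro b hb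
        rw [Finset.mem_range] at hb
        apply if_congr _ rfl rfl
        constructor
        · intro ⟨h1, _⟩; omega
        · intro h1
          exact ⟨by omega, Or.inl (Or.inl ⟨haD, hb⟩)⟩
      rw [Finset.sum_congr rfl hc, ← Finset.card_filter, Finset.filter_ne',
        Finset.card_erase_of_mem (Finset.mem_range.mpr haD), Finset.card_range]
    have h2 : ∑ b ∈ Finset.Ico (Dur π) π.length,
        (if a ≠ b ∧ (sbase (Dur π) M a b ∨ sbase (Dur π) M b a) then 1 else 0)
        = rsum (π.length - Dur π) M a := by
      have hc : ∀ b ∈ Finset.Ico (Dur π) π.length,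
          (if a ≠ b ∧ (sbase (Dur π) M a b ∨ sbase (Dur π) M b a) then 1 else 0)
          = if M a (b - Dur π) = true then 1 else 0 := by
        intro b hb
        rw [Finset.mem_Ico] at hb
        apply if_congr _ rfl rfl
        constructor
        · intro ⟨_, h2⟩
          rcases h2 with h2 | h2
          · unfold sbase at h2; rcases h2 with ⟨_, h3⟩ | ⟨_, _, h3⟩
            · omega
            · exact h3
          · unfold sbase at h2
            rcases h2 with ⟨h3, _⟩ | ⟨h3, _, _⟩ <;> omega
        · intro h2
          exact ⟨by omega, Or.inl (Or.inr ⟨haD, hb.1, h2⟩)⟩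
      rw [Finset.sum_congr rfl hc]
      unfold rsum
      rw [Finset.sum_Ico_eq_sum_range]
      apply Finset.sum_congr rfl
      intro j _
      rw [show Dur π + j - Dur π = j by omega]
    rw [h1, h2, hrow a haD]
    have := dfn_ge_Dur hπ haD
    omega
  · -- independent-set vertex
    have haD' : Dur π ≤ a := by omega
    have h1 : ∑ b ∈ Finset.range (Dur π),
        (if a ≠ b ∧ (sbase (Dur π) M a b ∨ sbase (Dur π) M b a) then 1 else 0)
        = csum (Dur π) M (a - Dur π) := by
      have hc : ∀ b ∈ Finset.range (Dur π),
          (if a ≠ b ∧ (sbase (Dur π) M a b ∨ sbase (Dur π) M b a) then 1 else 0)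
          = if M b (a - Dur π) = true then 1 else 0 := by
        intro b hb
        rw [Finset.mem_range] at hb
        apply if_congr _ rfl rfl
        constructor
        · intro ⟨_, h2⟩
          rcases h2 with h2 | h2
          · unfold sbase at h2
            rcases h2 with ⟨h3, _⟩ | ⟨h3, _, _⟩ <;> omega
          · unfold sbase at h2
            rcases h2 with ⟨_, h3⟩ | ⟨_, _, h3⟩
            · omega
            · exact h3
        · intro h2
          exact ⟨by omega, Or.inr (Or.inr ⟨hb, haD', h2⟩)⟩
      rw [Finset.sum_congr rfl hc]
      unfold csum
      rfl
    have h2 : ∑ b ∈ Finset.Ico (Dur π) π.length,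
        (if a ≠ b ∧ (sbase (Dur π) M a b ∨ sbase (Dur π) M b a) then 1 else 0)
        = 0 := by
      apply Finset.sum_eq_zero
      intro b hb
      rw [Finset.mem_Ico] at hb
      rw [if_neg]
      intro ⟨_, h2⟩
      rcases h2 with h2 | h2 <;> (unfold sbase at h2; rcases h2 with ⟨h3, _⟩ | ⟨h3, _, _⟩ <;> omega)
    rw [h1, h2, hcol (a - Dur π) (by omega), show Dur π + (a - Dur π) = a by omega]
    omega

end St9
namespace St9
open Finset

variable {π : List ℕ}

lemma backward (hπ : IsPartition π) (hmaj : Majorizes (betaOf π) (alphaOf π)) :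
    ∃ (V : Type) (_ : Fintype V) (G : SimpleGraph V) (_ : DecidableRel G.Adj),
      IsSplit G ∧ NoIsolated G ∧ HasDegSeq G π := by
  have hDL : Dur π ≤ π.length := Dur_le_len
  have hBD : ∑ j ∈ Finset.range (Dur π), betaColCount π (j + 1) = (betaOf π).sum := by
    rw [beta_sum hπ]
    symm
    apply Finset.sum_subset
    · exact Finset.range_subset_range.mpr (Db_le_Dur hπ)
    · intro j _ hj
      rw [Finset.mem_range] at hj
      exact b_zero hπ (by omega)
  -- dominance for all t ≤ Dur
  have h1 : ∀ t, t ≤ Dur π → ∑ i ∈ Finset.range t, (dfn π i - i)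
      ≤ ∑ j ∈ Finset.range t, betaColCount π (j + 1) := by
    intro t ht
    rcases le_or_gt t (Db π) with h | h
    · have h2 := hmaj.2 t (by
        rw [alpha_length hπ, beta_length hπ]
        have := Db_le_Dur hπ (π := π)
        omega)
      rw [alpha_take hπ ht, beta_take hπ h] at h2
      exact h2
    · have ht' : t = Dur π := by
        have := Dur_le_Db_succ hπ
        omega
      subst ht'
      rw [hBD, ← alpha_sum hπ, hmaj.1]
  -- arithmetic identities
  have hdge : ∀ i, i < Dur π → Dur π ≤ dfn π i := fun i hi => dfn_ge_Dur hπ hi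
  have idA : ∀ t, t ≤ Dur π → ∑ i ∈ Finset.range t, (dfn π i - i)
      = (∑ i ∈ Finset.range t, (dfn π i - (Dur π - 1)))
        + (t * (Dur π - t) + ∑ i ∈ Finset.range t, i) := by
    intro t ht
    have hterm : ∀ i ∈ Finset.range t, dfn π i - i
        = (dfn π i - (Dur π - 1)) + (Dur π - 1 - i) := by
      intro i hi
      rw [Finset.mem_range] at hi
      have := hdge i (by omega)
      omega
    rw [Finset.sum_congr rfl hterm, Finset.sum_add_distrib]
    congr 1
    have hrefl : ∑ i ∈ Finset.range t, (Dur π - 1 - i)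
        = ∑ i ∈ Finset.range t, (Dur π - t + i) := by
      rw [← Finset.sum_range_reflect (fun i => Dur π - 1 - i) t]
      apply Finset.sum_congr rfl
      intro i hi
      rw [Finset.mem_range] at hi
      omega
    rw [hrefl, Finset.sum_add_distrib, Finset.sum_const, Finset.card_range, smul_eq_mul,
      mul_comm]
  have idB : ∀ t, t ≤ Dur π → ∑ j ∈ Finset.range t, betaColCount π (j + 1)
      = ∑ i ∈ Finset.range t, i + (Dur π - t) * t
        + ∑ j ∈ Finset.range (π.length - Dur π), min t (dfn π (Dur π + j)) := by
    intro t ht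
    rw [Bt_split hπ ht]
    have hsplit : ∑ i ∈ Finset.Ico t π.length, min t (dfn π i)
        = ∑ i ∈ Finset.Ico t (Dur π), min t (dfn π i)
          + ∑ i ∈ Finset.Ico (Dur π) π.length, min t (dfn π i) :=
      (Finset.sum_Ico_consecutive _ ht hDL).symm
    have hIco1 : ∑ i ∈ Finset.Ico t (Dur π), min t (dfn π i) = (Dur π - t) * t := by
      have hterm : ∀ i ∈ Finset.Ico t (Dur π), min t (dfn π i) = t := by
        intro i hi
        rw [Finset.mem_Ico] at hi
        have := hdge i hi.2
        omega
      rw [Finset.sum_congr rfl hterm, Finset.sum_const, Nat.card_Ico, smul_eq_mul]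
    have hIco2 : ∑ i ∈ Finset.Ico (Dur π) π.length, min t (dfn π i)
        = ∑ j ∈ Finset.range (π.length - Dur π), min t (dfn π (Dur π + j)) :=
      Finset.sum_Ico_eq_sum_range _ _ _
    omega
  -- Gale–Ryser data
  have hGR : ∀ t, t ≤ Dur π → ∑ i ∈ Finset.range t, (dfn π i - (Dur π - 1))
      ≤ ∑ j ∈ Finset.range (π.length - Dur π), min t (dfn π (Dur π + j)) := by
    intro t ht
    have ha := idA t ht
    have hb := idB t ht
    have hc := h1 t ht
    have hm : t * (Dur π - t) = (Dur π - t) * t := Nat.mul_comm _ _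
    omega
  have he_anti : Antitone (fun i => dfn π i - (Dur π - 1)) := by
    intro x y hxy
    have := dfn_anti hπ hxy
    simp only
    omega
  have hcle : ∀ j, j < π.length - Dur π → dfn π (Dur π + j) ≤ Dur π := by
    intro j _
    have h2 : dfn π (Dur π + j) ≤ dfn π (Dur π) := dfn_anti hπ (by omega)
    have h3 := @Dur_spec π
    omega
  have hsum_ec : ∑ i ∈ Finset.range (Dur π), (dfn π i - (Dur π - 1))
      = ∑ j ∈ Finset.range (π.length - Dur π), dfn π (Dur π + j) := by
    have ha := idA (Dur π) le_rfl
    have hb := idB (Dur π) le_rfl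
    have heq : ∑ i ∈ Finset.range (Dur π), (dfn π i - i)
        = ∑ j ∈ Finset.range (Dur π), betaColCount π (j + 1) := by
      rw [hBD, ← alpha_sum hπ, hmaj.1]
    have hminc : ∑ j ∈ Finset.range (π.length - Dur π), min (Dur π) (dfn π (Dur π + j))
        = ∑ j ∈ Finset.range (π.length - Dur π), dfn π (Dur π + j) := by
      apply Finset.sum_congr rfl
      intro j hj
      rw [Finset.mem_range] at hj
      have := hcle j hj
      omega
    simp only [Nat.sub_self, Nat.mul_zero, Nat.zero_mul] at ha hb
    omega
  obtain ⟨M, hrow, hcol⟩ := GR_exists (Dur π) (π.length - Dur π)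
    (fun i => dfn π i - (Dur π - 1)) (fun j => dfn π (Dur π + j))
    he_anti hcle hGR hsum_ec
  have hdeg : ∀ v : Fin π.length, (sgraph π.length (Dur π) M).degree v = dfn π v.val := by
    apply sgraph_degree hπ M
    · intro i hi; exact hrow i hi
    · intro j hj; exact hcol j hj
  refine ⟨Fin π.length, inferInstance, sgraph π.length (Dur π) M, inferInstance, ?_, ?_, ?_⟩
  · -- split
    refine ⟨Finset.univ.filter (fun v : Fin π.length => v.val < Dur π),
      Finset.univ.filter (fun v : Fin π.length => ¬ v.val < Dur π), ?_, ?_, ?_, ?_⟩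
    · intro v
      by_cases h : v.val < Dur π
      · left; simp only [Finset.mem_filter, Finset.mem_univ, true_and]; exact h
      · right; simp only [Finset.mem_filter, Finset.mem_univ, true_and]; exact h
    · rw [Finset.disjoint_left]
      intro v hv hv'
      simp only [Finset.mem_filter] at hv hv'
      exact hv'.2 hv.2
    · intro u hu v hv huv
      simp only [Finset.coe_filter, Set.mem_setOf_eq] at hu hv
      rw [sgraph_adj]
      exact ⟨Fin.val_ne_iff.mpr huv, Or.inl (Or.inl ⟨hu.2, hv.2⟩)⟩
    · intro u hu v hv huv hadj
      simp only [Finset.coe_filter, Set.mem_setOf_eq] at hu hv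
      rw [sgraph_adj] at hadj
      obtain ⟨_, h⟩ := hadj
      unfold sbase at h
      rcases h with (⟨h1, _⟩ | ⟨h1, _, _⟩) | (⟨h1, _⟩ | ⟨h1, _, _⟩)
      · exact hu.2 h1
      · exact hu.2 h1
      · exact hv.2 h1
      · exact hv.2 h1
  · -- no isolated vertices
    intro v
    rw [hdeg v]
    exact dfn_pos hπ v.2
  · -- degree sequence
    refine ⟨hπ.1, ?_⟩
    have h1 : Finset.univ.val.map (fun v : Fin π.length => (sgraph π.length (Dur π) M).degree v)
        = ↑(List.ofFn (fun v : Fin π.length => (sgraph π.length (Dur π) M).degree v)) :=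
      Fin.univ_val_map _
    have h2 : List.ofFn (fun v : Fin π.length => (sgraph π.length (Dur π) M).degree v)
        = (List.range π.length).map (fun i => dfn π i) := by
      apply List.ext_getElem
      · simp
      · intro i hi1 hi2
        simp only [List.getElem_ofFn, List.getElem_map, List.getElem_range]
        exact hdeg _
    rw [h1, h2, ← pi_eq_map]

end St9
namespace St9
open Finset

variable {π : List ℕ}

lemma maj_to_sblock (hπ : IsPartition π) (hmaj : Majorizes (betaOf π) (alphaOf π)) :
    IsSBlock (alphaOf π).sum (alphaOf π) (betaOf π) := by
  refine ⟨⟨alpha_sorted hπ, alpha_pos hπ, rfl⟩, ⟨beta_sorted hπ, beta_pos hπ, hmaj.1⟩,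
    hmaj, ?_⟩
  rw [alpha_length hπ, beta_length hπ]
  have h1 := Db_le_Dur hπ
  have h2 := Dur_le_Db_succ hπ
  omega

end St9

/-- A partition π is the degree sequence of some split graph with no isolated
vertices iff [α(π)|β(π)] is an S-block, i.e. iff α(π) and β(π) partition the same integer
and β(π) ⪰ α(π). -/
theorem stmt9 (π : List ℕ) (hπ : IsPartition π) :
    ((∃ (V : Type) (_ : Fintype V) (G : SimpleGraph V) (_ : DecidableRel G.Adj),
        IsSplit G ∧ NoIsolated G ∧ HasDegSeq G π) ↔
      IsSBlock (alphaOf π).sum (alphaOf π) (betaOf π)) ∧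
    ((∃ (V : Type) (_ : Fintype V) (G : SimpleGraph V) (_ : DecidableRel G.Adj),
        IsSplit G ∧ NoIsolated G ∧ HasDegSeq G π) ↔
      Majorizes (betaOf π) (alphaOf π)) := by
  constructor
  · constructor
    · rintro ⟨V, hV, G, hG, hs, hn, hd⟩
      exact St9.maj_to_sblock hπ (@St9.forward π hπ V hV G hG hs hd)
    · intro h
      exact St9.backward hπ h.2.2.1
  · constructor
    · rintro ⟨V, hV, G, hG, hs, hn, hd⟩
      exact @St9.forward π hπ V hV G hG hs hd
    · intro h
      exact St9.backward hπ h
end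

section
/- Let [α_1|β_1], [α_2|β_2] ∈ S-Block(n) with [α_1|β_1] ⪰ [α_2|β_2]. If [α_1|β_1] is balanced, then [α_2|β_2] is balanced; equivalently, if [α_2|β_2] is unbalanced, then [α_1|β_1] is unbalanced. -/
lemma maj_len_le' (β α : List ℕ) (hpos : ∀ x ∈ β, 0 < x) (h : Majorizes β α) :
    β.length ≤ α.length := by
  by_contra hlt
  push_neg at hlt
  have hk := h.2 α.length (by simp [Nat.le_of_lt hlt])
  rw [List.take_length] at hk
  have hsplit : (β.take α.length).sum + (β.drop α.length).sum = β.sum := by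
    rw [← List.sum_append, List.take_append_drop]
  have hdrop : 0 < (β.drop α.length).sum := by
    have hne : β.drop α.length ≠ [] := by
      simp [List.drop_eq_nil_iff]; omega
    obtain ⟨y, hy⟩ := List.exists_mem_of_ne_nil _ hne
    have := hpos y (List.mem_of_mem_drop hy)
    calc 0 < y := this
      _ ≤ _ := List.single_le_sum (fun _ _ => Nat.zero_le _) _ hy
  have h1 := h.1
  omega

/-- For S-blocks [α₁|β₁] ⪰ [α₂|β₂] in S-Block(n): if [α₁|β₁] is balanced then
so is [α₂|β₂]; equivalently if [α₂|β₂] is unbalanced then so is [α₁|β₁]. -/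
theorem stmt10 (n : ℕ) (α₁ β₁ α₂ β₂ : List ℕ)
    (h₁ : IsSBlock n α₁ β₁) (h₂ : IsSBlock n α₂ β₂) (hmaj : BlockMaj α₁ β₁ α₂ β₂) :
    (α₁.length = β₁.length + 1 → α₂.length = β₂.length + 1) ∧
      (α₂.length = β₂.length → α₁.length = β₁.length) := by
  have hA : α₁.length ≤ α₂.length := maj_len_le' α₁ α₂ h₁.1.2.1 hmaj.1
  have hB : β₂.length ≤ β₁.length := maj_len_le' β₂ β₁ h₂.2.1.2.1 hmaj.2
  have d1 := h₁.2.2.2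
  have d2 := h₂.2.2.2
  omega
end

section
/- An element of S-Block(n) is maximal if and only if it has the form [γ|γ] for some γ ∈ Dis(n); that is, the set of maximal elements of S-Block(n) is exactly {[γ|γ] : γ ∈ Dis(n)}. -/
lemma majorizes_refl (a : List ℕ) : Majorizes a a :=
  ⟨rfl, fun _ _ => le_refl _⟩

lemma len_le_of_majorizes {b a : List ℕ} (hb : ∀ x ∈ b, 0 < x) (h : Majorizes b a) :
    b.length ≤ a.length := by
  by_contra hlt
  push_neg at hlt
  have hk := h.2 a.length (by omega)
  rw [List.take_length] at hk
  have hsplit : b.sum = (b.take a.length).sum + (b.drop a.length).sum := by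
    rw [← List.sum_append, List.take_append_drop]
  have hdrop : 0 < (b.drop a.length).sum := by
    apply List.sum_pos
    · intro x hx; exact hb x (List.mem_of_mem_drop hx)
    · intro hnil
      have := congrArg List.length hnil
      simp at this
      omega
  have : a.sum = b.sum := h.1.symm
  omega

lemma eq_of_take_sum : ∀ (a b : List ℕ), a.length = b.length →
    (∀ k ≤ a.length, (a.take k).sum = (b.take k).sum) → a = b := by
  intro a
  induction a with
  | nil =>
    intro b h _
    exact (List.length_eq_zero_iff.mp h.symm).symm
  | cons x a ih =>
    intro b hlen hsum
    cases b with
    | nil => simp at hlen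
    | cons y b =>
      have h1 := hsum 1 (by simp)
      simp at h1
      subst h1
      have htail : a = b := by
        apply ih b (by simpa using hlen)
        intro k hk
        have := hsum (k + 1) (by simp; omega)
        simpa [List.take_succ_cons] using this
      rw [htail]

/-- An element [α|β] of S-Block(n) is maximal iff it has the form [γ|γ],
i.e. iff α = β. -/
theorem stmt11 (n : ℕ) (α β : List ℕ) (h : IsSBlock n α β) :
    ((∀ α' β', IsSBlock n α' β' → BlockMaj α' β' α β → α' = α ∧ β' = β) ↔ α = β) := by
  constructor
  · intro hmax
    have hsb : IsSBlock n β β := ⟨h.2.1, h.2.1, majorizes_refl β, Or.inl rfl⟩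
    have hbm : BlockMaj β β α β := ⟨h.2.2.1, majorizes_refl β⟩
    exact (hmax β β hsb hbm).1.symm
  · intro heq
    subst heq
    intro α' β' hsb hbm
    obtain ⟨hdα', hdβ', hmaj', hlen'⟩ := hsb
    obtain ⟨h1, h2⟩ := hbm
    -- h1 : Majorizes α' α, h2 : Majorizes α β', hmaj' : Majorizes β' α'
    have l1 : α'.length ≤ α.length := len_le_of_majorizes hdα'.2.1 h1
    have l2 : α.length ≤ β'.length := len_le_of_majorizes h.1.2.1 h2
    have l3 : β'.length ≤ α'.length := len_le_of_majorizes hdβ'.2.1 hmaj'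
    have e1 : α'.length = α.length := by omega
    have e2 : β'.length = α.length := by omega
    have key : ∀ k ≤ α.length, (α'.take k).sum = (α.take k).sum ∧
        (β'.take k).sum = (α.take k).sum := by
      intro k hk
      have a1 := h1.2 k (by omega)
      have a2 := h2.2 k (by omega)
      have a3 := hmaj'.2 k (by omega)
      omega
    constructor
    · exact eq_of_take_sum α' α e1 (fun k hk => (key k (by omega)).1)
    · exact eq_of_take_sum β' α e2 (fun k hk => (key k (by omega)).2)
end
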